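/- arXiv:1408.2099 — 5 statements merged into one kernel-verified Lean document; each statement's English description precedes it below -/
import Mathlib

section
/- Let γ>1 and η,ν≥0 be constants, and let ρ,p:ℝ×ℝ³→ℝ and v,B:ℝ×ℝ³→ℝ³ be smooth fields with ∇·B=0 satisfying the resistive viscous MHD system ∂_tρ+∇·(ρv)=0; ρ∂_tv+ρ(v·∇)v+∇p=J×B+νΔv; ∂_tp+v·∇p+γp∇·v=0; ∂_tB=∇×(v×B−ηJ), with J:=∇×B. Assume there is a compact set K⊂ℝ³ such that for every t the fields ρ(t,·), p(t,·), v(t,·), B(t,·) vanish outside K. Then, with E:=ρ|v|²/2+|B|²/2+p/(γ−1), the function t↦∫_{ℝ³}E(t,x)dx is differentiable and d/dt∫_{ℝ³}E = −η∫_{ℝ³}|J|² − ν∫_{ℝ³}|∇×v|² − ν∫_{ℝ³}|∇·v|² ≤ 0; in particular, if η=ν=0 the total energy is constant in time. -/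
noncomputable section
set_option linter.unusedVariables false

open MeasureTheory

/-- Points of ℝ³. -/
abbrev V3 := Fin 3 → ℝ

/-- Partial derivative `∂_i g` of a scalar field on ℝ³. -/
def pd (i : Fin 3) (g : V3 → ℝ) (x : V3) : ℝ := fderiv ℝ g x (Pi.single i 1)

/-- Divergence `∇·F = ∑ i ∂_i F_i`. -/
def divg (F : V3 → V3) (x : V3) : ℝ := ∑ i, pd i (fun y => F y i) x

/-- Curl `(∇×F)_i = ε_{ijk} ∂_j F_k`. -/
def curl (F : V3 → V3) (x : V3) : V3 :=
  ![pd 1 (fun y => F y 2) x - pd 2 (fun y => F y 1) x,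
    pd 2 (fun y => F y 0) x - pd 0 (fun y => F y 2) x,
    pd 0 (fun y => F y 1) x - pd 1 (fun y => F y 0) x]

/-- Componentwise Laplacian `Δg = ∑ j ∂_j ∂_j g`. -/
def lap (g : V3 → ℝ) (x : V3) : ℝ := ∑ j, pd j (fun y => pd j g y) x

/-- Advection `((v·∇)F)_i = ∑ j v_j ∂_j F_i`. -/
def adv (v F : V3 → V3) (x : V3) : V3 := fun i => ∑ j, v x j * pd j (fun y => F y i) x

/-- Euclidean cross product on ℝ³. -/
def cross (a b : V3) : V3 :=
  ![a 1 * b 2 - a 2 * b 1, a 2 * b 0 - a 0 * b 2, a 0 * b 1 - a 1 * b 0]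

/-- Euclidean dot product on ℝ³. -/
def dot (a b : V3) : ℝ := ∑ i, a i * b i

/-- Time derivative of a time-dependent scalar field. -/
def dt (f : ℝ → V3 → ℝ) (t : ℝ) (x : V3) : ℝ := deriv (fun s => f s x) t

/-- Joint smoothness (C^∞ in `(t,x)`) of a time-dependent scalar field. -/
def SmoothS (f : ℝ → V3 → ℝ) : Prop := ContDiff ℝ (⊤ : ℕ∞) fun q : ℝ × V3 => f q.1 q.2

/-- Joint smoothness (C^∞ in `(t,x)`) of a time-dependent vector field. -/
def SmoothV (F : ℝ → V3 → V3) : Prop := ContDiff ℝ (⊤ : ℕ∞) fun q : ℝ × V3 => F q.1 q.2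

/-- Total energy density `E = ρ|v|²/2 + |B|²/2 + p/(γ−1)`. -/
def Edens (γ : ℝ) (ρ p : ℝ → V3 → ℝ) (v B : ℝ → V3 → V3) : ℝ → V3 → ℝ := fun t y =>
  ρ t y * (∑ i, v t y i ^ 2) / 2 + (∑ i, B t y i ^ 2) / 2 + p t y / (γ - 1)

/-- Energy flux `v(ρ|v|²/2 + γp/(γ−1)) − (v×B)×B + η(J×B)` with `J = ∇×B`. -/
def eflux (γ η : ℝ) (ρ p : ℝ → V3 → ℝ) (v B : ℝ → V3 → V3) (t : ℝ) : V3 → V3 := fun y =>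
  (ρ t y * (∑ i, v t y i ^ 2) / 2 + γ * p t y / (γ - 1)) • v t y
    - cross (cross (v t y) (B t y)) (B t y)
    + η • cross (curl (B t) y) (B t y)

/-- Energy dissipation rate `−η∫|J|² − ν∫|∇×v|² − ν∫|∇·v|²`. -/
def dissip (η ν : ℝ) (v B : ℝ → V3 → V3) (t : ℝ) : ℝ :=
  -η * (∫ x : V3, ∑ i, curl (B t) x i ^ 2)
    - ν * (∫ x : V3, ∑ i, curl (v t) x i ^ 2)
    - ν * (∫ x : V3, divg (v t) x ^ 2)


/-! ### Auxiliary machinery -/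

namespace MHDaux

abbrev SM (g : V3 → ℝ) : Prop := ContDiff ℝ (⊤ : ℕ∞) g

lemma fderiv_right' {g : V3 → ℝ} (hg : SM g) : ContDiff ℝ (⊤:ℕ∞) (fderiv ℝ g) :=
  hg.fderiv_right (m := (⊤:ℕ∞)) (by exact_mod_cast le_top)

lemma SM.pd {g : V3 → ℝ} (hg : SM g) (i : Fin 3) : SM (pd i g) :=
  (fderiv_right' hg).clm_apply contDiff_const

lemma SM.diff {g : V3 → ℝ} (hg : SM g) : Differentiable ℝ g :=
  hg.differentiable (by simp)

lemma SM.dAt {g : V3 → ℝ} (hg : SM g) {x : V3} : DifferentiableAt ℝ g x :=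
  hg.diff.differentiableAt

lemma SM.cont {g : V3 → ℝ} (hg : SM g) : Continuous g := hg.continuous

lemma pd_comm {g : V3 → ℝ} (hg : SM g) (i j : Fin 3) (x : V3) :
    pd i (pd j g) x = pd j (pd i g) x := by
  unfold pd
  have hd : Differentiable ℝ (fderiv ℝ g) :=
    (fderiv_right' hg).differentiable (by simp)
  rw [fderiv_clm_apply (hd x) (differentiableAt_const _),
    fderiv_clm_apply (hd x) (differentiableAt_const _)]
  simp only [fderiv_fun_const, Pi.zero_apply, ContinuousLinearMap.add_apply,
    ContinuousLinearMap.comp_apply, ContinuousLinearMap.flip_apply, ContinuousLinearMap.zero_apply,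
    map_zero, zero_add]
  have h2 : ((2:ℕ) : WithTop ℕ∞) ≤ ((⊤:ℕ∞) : WithTop ℕ∞) :=
    le_trans (WithTop.coe_le_coe.mpr (le_top : (2:ℕ∞) ≤ ⊤)) (by norm_num)
  rw [(hg.contDiffAt (x := x)).isSymmSndFDerivAt (by rw [minSmoothness_of_isRCLikeNormedField]; exact h2) _ _]

/-! ### pd arithmetic -/

lemma pd_congr_nhds {g h : V3 → ℝ} {x : V3} (hgh : g =ᶠ[nhds x] h) (i : Fin 3) :
    pd i g x = pd i h x := by unfold pd; rw [Filter.EventuallyEq.fderiv_eq hgh]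

lemma pd_zero_off {K : Set V3} (hKc : IsClosed K) {g : V3 → ℝ}
    (h : ∀ y ∉ K, g y = 0) {x : V3} (hx : x ∉ K) (i : Fin 3) : pd i g x = 0 := by
  have hmem : Kᶜ ∈ nhds x := hKc.isOpen_compl.mem_nhds hx
  have : g =ᶠ[nhds x] (fun _ => 0) := Filter.eventually_of_mem hmem (fun y hy => h y hy)
  rw [pd_congr_nhds this i]
  unfold pd; rw [fderiv_fun_const]; simp

lemma pd_mul {f g : V3 → ℝ} {x : V3} (hf : DifferentiableAt ℝ f x)
    (hg : DifferentiableAt ℝ g x) (i : Fin 3) :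
    pd i (fun y => f y * g y) x = f x * pd i g x + pd i f x * g x := by
  unfold pd
  rw [fderiv_fun_mul hf hg]
  simp [mul_comm]

lemma pd_add {f g : V3 → ℝ} {x : V3} (hf : DifferentiableAt ℝ f x)
    (hg : DifferentiableAt ℝ g x) (i : Fin 3) :
    pd i (fun y => f y + g y) x = pd i f x + pd i g x := by
  unfold pd; rw [fderiv_fun_add hf hg]; simp

lemma pd_sub {f g : V3 → ℝ} {x : V3} (hf : DifferentiableAt ℝ f x)
    (hg : DifferentiableAt ℝ g x) (i : Fin 3) :
    pd i (fun y => f y - g y) x = pd i f x - pd i g x := by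
  unfold pd; rw [fderiv_fun_sub hf hg]; simp

lemma pd_const_mul {f : V3 → ℝ} {x : V3} (c : ℝ) (hf : DifferentiableAt ℝ f x) (i : Fin 3) :
    pd i (fun y => c * f y) x = c * pd i f x := by
  unfold pd; rw [fderiv_const_mul hf]; simp

lemma pd_div_const {f : V3 → ℝ} {x : V3} (c : ℝ) (hf : DifferentiableAt ℝ f x) (i : Fin 3) :
    pd i (fun y => f y / c) x = pd i f x / c := by
  have : (fun y => f y / c) = fun y => f y * c⁻¹ := by ext y; rw [div_eq_mul_inv]
  unfold pd; rw [this, fderiv_mul_const hf]; simp [div_eq_mul_inv, mul_comm]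

lemma pd_sum {f : Fin 3 → V3 → ℝ} {x : V3} (hf : ∀ k, DifferentiableAt ℝ (f k) x) (i : Fin 3) :
    pd i (fun y => ∑ k, f k y) x = ∑ k, pd i (f k) x := by
  unfold pd
  rw [fderiv_fun_sum (fun k _ => hf k)]
  simp

lemma pd_pow2 {f : V3 → ℝ} {x : V3} (hf : DifferentiableAt ℝ f x) (i : Fin 3) :
    pd i (fun y => f y ^ 2) x = 2 * f x * pd i f x := by
  have : (fun y => f y ^ 2) = fun y => f y * f y := by ext y; ring
  rw [this, pd_mul hf hf]; ring

/-! ### time derivative helpers -/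

lemma _root_.SmoothS.slice {f : ℝ → V3 → ℝ} (hf : SmoothS f) (t : ℝ) : SM (f t) :=
  hf.comp ((contDiff_const (c := t)).prodMk contDiff_id)

lemma _root_.SmoothS.hasDerivAt {f : ℝ → V3 → ℝ} (hf : SmoothS f) (t : ℝ) (x : V3) :
    HasDerivAt (fun s => f s x) (dt f t x) t := by
  have hdiff : DifferentiableAt ℝ (fun q : ℝ × V3 => f q.1 q.2) (t, x) :=
    (hf.differentiable (by simp)).differentiableAt
  have hcurve : HasDerivAt (fun s : ℝ => (s, x)) ((1 : ℝ), (0 : V3)) t :=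
    (hasDerivAt_id t).prodMk (hasDerivAt_const t x)
  have hd : HasDerivAt (fun s => f s x)
      (fderiv ℝ (fun q : ℝ × V3 => f q.1 q.2) (t, x) (1, 0)) t := by
    have := hdiff.hasFDerivAt.comp_hasDerivAt t hcurve; exact this
  have heq : dt f t x = fderiv ℝ (fun q : ℝ × V3 => f q.1 q.2) (t, x) (1, 0) := hd.deriv
  rw [heq]; exact hd

lemma _root_.SmoothS.dt_eq {f : ℝ → V3 → ℝ} (hf : SmoothS f) (t : ℝ) (x : V3) :
    dt f t x = fderiv ℝ (fun q : ℝ × V3 => f q.1 q.2) (t, x) (1, 0) :=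
  ((hf.differentiable (by simp)).differentiableAt.hasFDerivAt.comp_hasDerivAt t
    ((hasDerivAt_id t).prodMk (hasDerivAt_const t x))).deriv

lemma _root_.SmoothS.dt_cont {f : ℝ → V3 → ℝ} (hf : SmoothS f) :
    Continuous fun q : ℝ × V3 => dt f q.1 q.2 := by
  have heq : (fun q : ℝ × V3 => dt f q.1 q.2)
      = fun q : ℝ × V3 => fderiv ℝ (fun q : ℝ × V3 => f q.1 q.2) q (1, 0) := by
    ext q; exact hf.dt_eq q.1 q.2
  rw [heq]
  exact (hf.continuous_fderiv (by simp)).clm_apply continuous_const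

/-! ### integrability and integration by parts -/

lemma integrable_supp {K : Set V3} (hK : IsCompact K) {f : V3 → ℝ} (hf : Continuous f)
    (h0 : ∀ x ∉ K, f x = 0) : Integrable f :=
  hf.integrable_of_hasCompactSupport (HasCompactSupport.intro hK h0)

lemma integral_pd_zero {K : Set V3} (hK : IsCompact K) {g : V3 → ℝ} (hg : SM g)
    (h0 : ∀ x ∉ K, g x = 0) (i : Fin 3) : ∫ x : V3, pd i g x = 0 := by
  have hpd0 : ∀ x ∉ K, pd i g x = 0 := fun x hx => pd_zero_off hK.isClosed h0 hx i
  have h := integral_mul_fderiv_eq_neg_fderiv_mul_of_integrable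
    (μ := (volume : Measure V3)) (f := fun _ : V3 => (1:ℝ)) (g := g) (v := Pi.single i 1)
    (by simp only [fderiv_fun_const, Pi.zero_apply, ContinuousLinearMap.zero_apply, zero_mul]
        exact integrable_zero _ _ _)
    (by simp; exact integrable_supp hK ((hg.pd i).cont) hpd0)
    (by simpa using integrable_supp hK hg.cont h0)
    (fun x _ => differentiableAt_const _) (fun x _ => hg.dAt)
  simpa [fderiv_fun_const, pd] using h


lemma pd_neg {f : V3 → ℝ} {x : V3} (hf : DifferentiableAt ℝ f x) (i : Fin 3) :
    pd i (fun y => -(f y)) x = -(pd i f x) := by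
  unfold pd; rw [fderiv_fun_neg]; simp

/-! ### pointwise vector-calculus identities -/

lemma IdP {q : V3 → ℝ} {u : V3 → V3} (hq : SM q) (hu : ∀ i, SM fun y => u y i) (x : V3) :
    ∑ k, pd k (fun y => q y * u y k) x = (∑ i, u x i * pd i q x) + q x * divg u x := by
  have h : ∀ k : Fin 3, pd k (fun y => q y * u y k) x
      = q x * pd k (fun y => u y k) x + pd k q x * u x k :=
    fun k => pd_mul hq.dAt (hu k).dAt k
  simp only [divg, Fin.sum_univ_three, h]
  ring

lemma IdK {r : V3 → ℝ} {u : V3 → V3} (hr : SM r) (hu : ∀ i, SM fun y => u y i) (x : V3) :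
    ∑ k, pd k (fun y => r y * u y k * ((∑ i, u y i ^ 2) / 2)) x
      = divg (fun y i => r y * u y i) x * ((∑ i, u x i ^ 2) / 2)
        + ∑ i, u x i * (r x * adv u u x i) := by
  have hsD : ∀ y : V3, DifferentiableAt ℝ (fun z => (∑ i, u z i ^ 2) / 2) y := by
    intro y
    have h1 : DifferentiableAt ℝ (fun z : V3 => ∑ i, u z i ^ 2) y :=
      DifferentiableAt.fun_sum fun i _ => ((hu i).dAt.fun_pow 2)
    simpa [div_eq_mul_inv] using h1.mul_const ((2:ℝ)⁻¹)
  have hs : ∀ k : Fin 3, pd k (fun z => (∑ i, u z i ^ 2) / 2) x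
      = (∑ i, 2 * u x i * pd k (fun z => u z i) x) / 2 := by
    intro k
    rw [pd_div_const _ (DifferentiableAt.fun_sum fun i _ => ((hu i).dAt.fun_pow 2)),
      pd_sum (fun i => ((hu i).dAt.fun_pow 2))]
    congr 1
    exact Finset.sum_congr rfl fun i _ => pd_pow2 (hu i).dAt k
  have h : ∀ k : Fin 3, pd k (fun y => r y * u y k * ((∑ i, u y i ^ 2) / 2)) x
      = (r x * u x k) * ((∑ i, 2 * u x i * pd k (fun z => u z i) x) / 2)
        + (r x * pd k (fun y => u y k) x + pd k r x * u x k) * ((∑ i, u x i ^ 2) / 2) := by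
    intro k
    rw [pd_mul (f := fun y => r y * u y k) (g := fun z => (∑ i, u z i ^ 2) / 2)
      (hr.dAt.mul (hu k).dAt) (hsD x) k, pd_mul hr.dAt (hu k).dAt, hs k]
  have hru : ∀ k : Fin 3, pd k (fun y => r y * u y k) x
      = r x * pd k (fun y => u y k) x + pd k r x * u x k :=
    fun k => pd_mul hr.dAt (hu k).dAt k
  simp only [h]
  simp only [divg, hru]
  simp only [adv, Fin.sum_univ_three]
  ring

lemma IdA {w b : V3 → V3} (hw : ∀ i, SM fun y => w y i) (hb : ∀ i, SM fun y => b y i) (x : V3) :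
    ∑ i, b x i * curl w x i
      = dot (w x) (curl b x) + ∑ k, pd k (fun y => cross (w y) (b y) k) x := by
  have e0 : pd 0 (fun y => cross (w y) (b y) 0) x
      = pd 0 (fun y => w y 1 * b y 2 - w y 2 * b y 1) x := rfl
  have e1 : pd 1 (fun y => cross (w y) (b y) 1) x
      = pd 1 (fun y => w y 2 * b y 0 - w y 0 * b y 2) x := rfl
  have e2 : pd 2 (fun y => cross (w y) (b y) 2) x
      = pd 2 (fun y => w y 0 * b y 1 - w y 1 * b y 0) x := rfl
  have hm : ∀ (k a c : Fin 3), pd k (fun y => w y a * b y c) x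
      = w x a * pd k (fun y => b y c) x + pd k (fun y => w y a) x * b x c :=
    fun k a c => pd_mul (hw a).dAt (hb c).dAt k
  have hsub : ∀ (k a c a' c' : Fin 3), pd k (fun y => w y a * b y c - w y a' * b y c') x
      = pd k (fun y => w y a * b y c) x - pd k (fun y => w y a' * b y c') x :=
    fun k a c a' c' => pd_sub ((hw a).dAt.mul (hb c).dAt) ((hw a').dAt.mul (hb c').dAt) k
  simp only [Fin.sum_univ_three, e0, e1, e2, hsub, hm, curl, dot, cross,
    Matrix.cons_val_zero, Matrix.cons_val_one, Matrix.head_cons, Matrix.cons_val_two,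
    Matrix.tail_cons]
  ring

lemma IdB (a bb J : V3) (η : ℝ) :
    dot (cross a bb - η • J) J
      = -(∑ i, a i * cross J bb i) - η * ∑ i, J i ^ 2 := by
  simp only [dot, cross, Fin.sum_univ_three, Pi.sub_apply, Pi.smul_apply, smul_eq_mul,
    Matrix.cons_val_zero, Matrix.cons_val_one, Matrix.head_cons, Matrix.cons_val_two,
    Matrix.tail_cons]
  ring

lemma IdV {u : V3 → V3} (hu : ∀ i, SM fun y => u y i) (x : V3) :
    ∑ i, u x i * lap (fun y => u y i) x
      = -(∑ i, curl u x i ^ 2) - divg u x ^ 2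
        + ((∑ k, pd k (fun y => ∑ i, u y i * pd k (fun z => u z i) y) x)
          - (∑ k, pd k (fun y => ∑ j, u y j * pd j (fun z => u z k) y) x)
          + ∑ k, pd k (fun y => u y k * divg u y) x) := by
  have eA : ∀ k : Fin 3, pd k (fun y => ∑ i, u y i * pd k (fun z => u z i) y) x
      = ∑ i, (u x i * pd k (pd k (fun z => u z i)) x
          + pd k (fun z => u z i) x * pd k (fun z => u z i) x) := by
    intro k
    rw [pd_sum (fun i => ((hu i).dAt.fun_mul ((hu i).pd k).dAt))]
    exact Finset.sum_congr rfl fun i _ => pd_mul (hu i).dAt ((hu i).pd k).dAt k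
  have eB : ∀ k : Fin 3, pd k (fun y => ∑ j, u y j * pd j (fun z => u z k) y) x
      = ∑ j, (u x j * pd k (pd j (fun z => u z k)) x
          + pd k (fun z => u z j) x * pd j (fun z => u z k) x) := by
    intro k
    rw [pd_sum (fun j => ((hu j).dAt.fun_mul ((hu k).pd j).dAt))]
    exact Finset.sum_congr rfl fun j _ => pd_mul (hu j).dAt ((hu k).pd j).dAt k
  have eC : ∀ k : Fin 3, pd k (fun y => u y k * divg u y) x
      = u x k * (∑ j, pd k (pd j (fun z => u z j)) x) + pd k (fun z => u z k) x * divg u x := by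
    intro k
    have hdg : (fun y => u y k * divg u y)
        = fun y => u y k * (∑ j, pd j (fun z => u z j) y) := by
      funext y; rw [divg]
    have hdgD : DifferentiableAt ℝ (fun y => ∑ j, pd j (fun z => u z j) y) x :=
      DifferentiableAt.fun_sum fun j _ => ((hu j).pd j).dAt
    rw [hdg, pd_mul (hu k).dAt hdgD, pd_sum (fun j => ((hu j).pd j).dAt), divg]
  simp only [eA, eB, eC]
  simp only [lap, curl, divg, Fin.sum_univ_three,
    Matrix.cons_val_zero, Matrix.cons_val_one, Matrix.head_cons, Matrix.cons_val_two,
    Matrix.tail_cons]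
  rw [pd_comm (hu 1) 1 0 x, pd_comm (hu 2) 2 0 x, pd_comm (hu 2) 2 1 x,
    pd_comm (hu 0) 1 0 x, pd_comm (hu 0) 2 0 x, pd_comm (hu 1) 2 1 x]
  ring


/-! ### the spatial energy identity -/

lemma spatial {K : Set V3} (hK : IsCompact K) (cg η ν : ℝ) (hc : cg ≠ 0)
    (r q : V3 → ℝ) (u b : V3 → V3)
    (hr : SM r) (hq : SM q) (hu : ∀ i, SM fun y => u y i) (hb : ∀ i, SM fun y => b y i)
    (h0r : ∀ x ∉ K, r x = 0) (h0q : ∀ x ∉ K, q x = 0)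
    (h0u : ∀ x ∉ K, ∀ i, u x i = 0) (h0b : ∀ x ∉ K, ∀ i, b x i = 0) :
    ∫ x : V3,
      ((-(divg (fun y i => r y * u y i) x)) * ((∑ i, u x i ^ 2) / 2)
        + (∑ i, u x i * (cross (curl b x) (b x) i + ν * lap (fun y => u y i) x
            - r x * adv u u x i - pd i q x))
        + (∑ i, b x i * curl (fun y => cross (u y) (b y) - η • curl b y) x i)
        + (-(∑ i, u x i * pd i q x) - (cg + 1) * q x * divg u x) / cg)
    = -η * (∫ x : V3, ∑ i, curl b x i ^ 2) - ν * (∫ x : V3, ∑ i, curl u x i ^ 2)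
        - ν * (∫ x : V3, divg u x ^ 2) := by
  classical
  set w : V3 → V3 := fun y => cross (u y) (b y) - η • curl b y with hw_def
  -- component smoothness
  have hcurlb : ∀ i, SM (fun y => curl b y i) := by
    intro i
    fin_cases i
    · exact ((hb 2).pd 1).sub ((hb 1).pd 2)
    · exact ((hb 0).pd 2).sub ((hb 2).pd 0)
    · exact ((hb 1).pd 0).sub ((hb 0).pd 1)
  have hcurlu : ∀ i, SM (fun y => curl u y i) := by
    intro i
    fin_cases i
    · exact ((hu 2).pd 1).sub ((hu 1).pd 2)
    · exact ((hu 0).pd 2).sub ((hu 2).pd 0)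
    · exact ((hu 1).pd 0).sub ((hu 0).pd 1)
  have hwc : ∀ i, SM (fun y => w y i) := by
    intro i
    have : (fun y => w y i) = fun y => cross (u y) (b y) i - η * curl b y i := rfl
    rw [this]
    fin_cases i
    · exact (((hu 1).mul (hb 2)).sub ((hu 2).mul (hb 1))).sub (contDiff_const.mul (hcurlb 0))
    · exact (((hu 2).mul (hb 0)).sub ((hu 0).mul (hb 2))).sub (contDiff_const.mul (hcurlb 1))
    · exact (((hu 0).mul (hb 1)).sub ((hu 1).mul (hb 0))).sub (contDiff_const.mul (hcurlb 2))
  have hdivgu : SM (fun y => divg u y) :=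
    ContDiff.sum fun i _ => ((hu i).pd i)
  -- support facts
  have hcurlb0 : ∀ x ∉ K, ∀ i, curl b x i = 0 := by
    intro x hx i
    fin_cases i <;>
      · show pd _ _ x - pd _ _ x = 0
        rw [pd_zero_off hK.isClosed (fun y hy => h0b y hy _) hx,
          pd_zero_off hK.isClosed (fun y hy => h0b y hy _) hx, sub_zero]
  have hcurlu0 : ∀ x ∉ K, ∀ i, curl u x i = 0 := by
    intro x hx i
    fin_cases i <;>
      · show pd _ _ x - pd _ _ x = 0
        rw [pd_zero_off hK.isClosed (fun y hy => h0u y hy _) hx,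
          pd_zero_off hK.isClosed (fun y hy => h0u y hy _) hx, sub_zero]
  have hdivgu0 : ∀ x ∉ K, divg u x = 0 := by
    intro x hx
    show ∑ i, pd i (fun y => u y i) x = 0
    refine Finset.sum_eq_zero fun i _ => ?_
    exact pd_zero_off hK.isClosed (fun y hy => h0u y hy _) hx i
  -- flux families
  set G1 : Fin 3 → V3 → ℝ := fun k y => r y * u y k * ((∑ i, u y i ^ 2) / 2) with hG1_def
  set G2 : Fin 3 → V3 → ℝ := fun k y => q y * u y k with hG2_def
  set G3 : Fin 3 → V3 → ℝ := fun k y => cross (w y) (b y) k with hG3_def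
  set G4 : Fin 3 → V3 → ℝ := fun k y => ∑ i, u y i * pd k (fun z => u z i) y with hG4_def
  set G5 : Fin 3 → V3 → ℝ := fun k y => ∑ j, u y j * pd j (fun z => u z k) y with hG5_def
  set G6 : Fin 3 → V3 → ℝ := fun k y => u y k * divg u y with hG6_def
  set H : Fin 3 → V3 → ℝ := fun k y => -(G1 k y) + (-((cg + 1)/cg)) * G2 k y + G3 k y
      + ν * (G4 k y - G5 k y + G6 k y) with hH_def
  have hsq : SM (fun y : V3 => (∑ i, u y i ^ 2) / 2) := by
    have h1 : SM (fun y : V3 => ∑ i, u y i ^ 2) := ContDiff.sum fun i _ => (hu i).pow 2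
    have h2 : SM (fun y : V3 => (∑ i, u y i ^ 2) * (2:ℝ)⁻¹) := h1.mul contDiff_const
    simpa [div_eq_mul_inv] using h2
  have hG1s : ∀ k, SM (G1 k) := fun k => ((hr.mul (hu k)).mul hsq)
  have hG2s : ∀ k, SM (G2 k) := fun k => hq.mul (hu k)
  have hG3s : ∀ k, SM (G3 k) := by
    intro k
    fin_cases k
    · exact ((hwc 1).mul (hb 2)).sub ((hwc 2).mul (hb 1))
    · exact ((hwc 2).mul (hb 0)).sub ((hwc 0).mul (hb 2))
    · exact ((hwc 0).mul (hb 1)).sub ((hwc 1).mul (hb 0))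
  have hG4s : ∀ k, SM (G4 k) := fun k => ContDiff.sum fun i _ => (hu i).mul ((hu i).pd k)
  have hG5s : ∀ k, SM (G5 k) := fun k => ContDiff.sum fun j _ => (hu j).mul ((hu k).pd j)
  have hG6s : ∀ k, SM (G6 k) := fun k => (hu k).mul hdivgu
  have hHs : ∀ k, SM (H k) := fun k =>
    (((hG1s k).neg.add (contDiff_const.mul (hG2s k))).add (hG3s k)).add
      (contDiff_const.mul (((hG4s k).sub (hG5s k)).add (hG6s k)))
  have hH0 : ∀ k, ∀ x ∉ K, H k x = 0 := by
    intro k x hx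
    have hG3z : G3 k x = 0 := by
      have hb' : ∀ i, b x i = 0 := h0b x hx
      fin_cases k <;>
        · show w x _ * b x _ - w x _ * b x _ = 0
          rw [hb' _, hb' _, mul_zero, mul_zero, sub_zero]
    simp only [hH_def, hG1_def, hG2_def, hG4_def, hG5_def, hG6_def]
    simp only [h0r x hx, h0q x hx, h0u x hx, hG3z, zero_mul, mul_zero, neg_zero,
      Finset.sum_const_zero, zero_add, add_zero, zero_sub, zero_div, sub_zero]
  -- the pointwise identity
  have hH_pd : ∀ (k : Fin 3) (x : V3), pd k (H k) x
      = -(pd k (G1 k) x) + (-((cg + 1)/cg)) * pd k (G2 k) x + pd k (G3 k) x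
        + ν * (pd k (G4 k) x - pd k (G5 k) x + pd k (G6 k) x) := by
    intro k x
    have d1 : DifferentiableAt ℝ (G1 k) x := (hG1s k).dAt
    have d2 : DifferentiableAt ℝ (G2 k) x := (hG2s k).dAt
    have d3 : DifferentiableAt ℝ (G3 k) x := (hG3s k).dAt
    have d4 : DifferentiableAt ℝ (G4 k) x := (hG4s k).dAt
    have d5 : DifferentiableAt ℝ (G5 k) x := (hG5s k).dAt
    have d6 : DifferentiableAt ℝ (G6 k) x := (hG6s k).dAt
    have e456 : pd k (fun y => G4 k y - G5 k y + G6 k y) x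
        = pd k (G4 k) x - pd k (G5 k) x + pd k (G6 k) x := by
      rw [pd_add (d4.fun_sub d5) d6, pd_sub d4 d5]
    have : H k = fun y => (-(G1 k y) + (-((cg + 1)/cg)) * G2 k y + G3 k y)
        + ν * (G4 k y - G5 k y + G6 k y) := rfl
    rw [this, pd_add (((d1.fun_neg.fun_add (d2.const_mul _)).fun_add d3)) (((d4.fun_sub d5).fun_add d6).const_mul _),
      pd_add (d1.fun_neg.fun_add (d2.const_mul _)) d3,
      pd_add d1.fun_neg (d2.const_mul _), pd_neg d1,
      pd_const_mul _ d2, pd_const_mul _ ((d4.fun_sub d5).fun_add d6), e456]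
  have hinv : cg * cg⁻¹ = 1 := mul_inv_cancel₀ hc
  have hpt : ∀ x : V3,
      ((-(divg (fun y i => r y * u y i) x)) * ((∑ i, u x i ^ 2) / 2)
        + (∑ i, u x i * (cross (curl b x) (b x) i + ν * lap (fun y => u y i) x
            - r x * adv u u x i - pd i q x))
        + (∑ i, b x i * curl w x i)
        + (-(∑ i, u x i * pd i q x) - (cg + 1) * q x * divg u x) / cg)
      = (-η * (∑ i, curl b x i ^ 2) - ν * (∑ i, curl u x i ^ 2) - ν * divg u x ^ 2)
        + ∑ k, pd k (H k) x := by
    intro x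
    have hIK := IdK hr hu x
    have hIP := IdP hq hu x
    have hIA := IdA hwc hb x
    have hIB : dot (w x) (curl b x)
        = -(∑ i, u x i * cross (curl b x) (b x) i) - η * ∑ i, curl b x i ^ 2 :=
      IdB (u x) (b x) (curl b x) η
    have hIV := IdV hu x
    rw [Fin.sum_univ_three (f := fun k => pd k (H k) x), hH_pd 0 x, hH_pd 1 x, hH_pd 2 x]
    simp only [hG1_def, hG2_def, hG3_def, hG4_def, hG5_def, hG6_def]
    simp only [adv, divg, dot, lap, curl, cross, Fin.sum_univ_three,
      Matrix.cons_val_zero, Matrix.cons_val_one, Matrix.head_cons, Matrix.cons_val_two,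
      Matrix.tail_cons, Pi.sub_apply, Pi.smul_apply, smul_eq_mul] at hIK hIP hIA hIB hIV ⊢
    linear_combination hIK + ((cg + 1)/cg) * hIP + hIA + hIB + ν * hIV
      + (u x 0 * pd 0 q x + u x 1 * pd 1 q x + u x 2 * pd 2 q x) * hinv
  -- integrability
  have hI1 : Integrable (fun x : V3 => ∑ i, curl b x i ^ 2) :=
    integrable_supp hK (continuous_finset_sum _ fun i _ => ((hcurlb i).cont.pow 2))
      (fun x hx => Finset.sum_eq_zero fun i _ => by rw [hcurlb0 x hx i]; norm_num)
  have hI2 : Integrable (fun x : V3 => ∑ i, curl u x i ^ 2) :=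
    integrable_supp hK (continuous_finset_sum _ fun i _ => ((hcurlu i).cont.pow 2))
      (fun x hx => Finset.sum_eq_zero fun i _ => by rw [hcurlu0 x hx i]; norm_num)
  have hI3 : Integrable (fun x : V3 => divg u x ^ 2) :=
    integrable_supp hK (hdivgu.cont.pow 2)
      (fun x hx => by rw [hdivgu0 x hx]; norm_num)
  have hFint : ∀ k : Fin 3, Integrable (fun x => pd k (H k) x) :=
    fun k => integrable_supp hK ((hHs k).pd k).cont
      (fun x hx => pd_zero_off hK.isClosed (hH0 k) hx k)
  calc ∫ x : V3,
      ((-(divg (fun y i => r y * u y i) x)) * ((∑ i, u x i ^ 2) / 2)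
        + (∑ i, u x i * (cross (curl b x) (b x) i + ν * lap (fun y => u y i) x
            - r x * adv u u x i - pd i q x))
        + (∑ i, b x i * curl w x i)
        + (-(∑ i, u x i * pd i q x) - (cg + 1) * q x * divg u x) / cg)
      = ∫ x : V3, ((-η * (∑ i, curl b x i ^ 2) - ν * (∑ i, curl u x i ^ 2)
          - ν * divg u x ^ 2) + ∑ k, pd k (H k) x) := by
        exact integral_congr_ae (Filter.Eventually.of_forall hpt)
    _ = (∫ x : V3, (-η * (∑ i, curl b x i ^ 2) - ν * (∑ i, curl u x i ^ 2)
          - ν * divg u x ^ 2)) + ∫ x : V3, ∑ k, pd k (H k) x := by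
        refine integral_add ?_ (integrable_finset_sum _ fun k _ => hFint k)
        exact ((hI1.const_mul (-η)).sub (hI2.const_mul ν)).sub (hI3.const_mul ν)
    _ = -η * (∫ x : V3, ∑ i, curl b x i ^ 2) - ν * (∫ x : V3, ∑ i, curl u x i ^ 2)
          - ν * (∫ x : V3, divg u x ^ 2) := by
        rw [integral_finset_sum _ (fun k _ => hFint k)]
        rw [Finset.sum_eq_zero (fun k _ => integral_pd_zero hK (hHs k) (hH0 k) k), add_zero]
        have hJ1 : Integrable (fun x : V3 => -η * (∑ i, curl b x i ^ 2)) := hI1.const_mul (-η)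
        have hJ2 : Integrable (fun x : V3 => ν * (∑ i, curl u x i ^ 2)) := hI2.const_mul ν
        have hJ3 : Integrable (fun x : V3 => ν * divg u x ^ 2) := hI3.const_mul ν
        have hJ12 : Integrable (fun x : V3 => -η * (∑ i, curl b x i ^ 2)
            - ν * (∑ i, curl u x i ^ 2)) := hJ1.sub hJ2
        rw [integral_sub hJ12 hJ3, integral_sub hJ1 hJ2,
          integral_const_mul, integral_const_mul, integral_const_mul]

end MHDaux

open MHDaux

theorem mhd_total_energy_dissipation (γ η ν : ℝ) (hγ : 1 < γ) (hη : 0 ≤ η) (hν : 0 ≤ ν)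
    (ρ p : ℝ → V3 → ℝ) (v B : ℝ → V3 → V3)
    (hρ : SmoothS ρ) (hp : SmoothS p) (hv : SmoothV v) (hB : SmoothV B)
    (hdivB : ∀ t x, divg (B t) x = 0)
    (hmass : ∀ t x, dt ρ t x + divg (fun y i => ρ t y * v t y i) x = 0)
    (hmom : ∀ t x (i : Fin 3),
      ρ t x * dt (fun s y => v s y i) t x + ρ t x * adv (v t) (v t) x i
          + pd i (p t) x
        = cross (curl (B t) x) (B t x) i + ν * lap (fun y => v t y i) x)
    (hpres : ∀ t x,
      dt p t x + (∑ i, v t x i * pd i (p t) x) + γ * p t x * divg (v t) x = 0)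
    (hind : ∀ t x (i : Fin 3),
      dt (fun s y => B s y i) t x
        = curl (fun y => cross (v t y) (B t y) - η • curl (B t) y) x i)
    (K : Set V3) (hK : IsCompact K)
    (hsupp : ∀ t x, x ∉ K → ρ t x = 0 ∧ p t x = 0 ∧ v t x = 0 ∧ B t x = 0) :
    (∀ t : ℝ,
      HasDerivAt (fun s => ∫ x : V3, Edens γ ρ p v B s x) (dissip η ν v B t) t
        ∧ dissip η ν v B t ≤ 0) ∧
    (η = 0 → ν = 0 → ∀ t₁ t₂ : ℝ,
      (∫ x : V3, Edens γ ρ p v B t₁ x) = ∫ x : V3, Edens γ ρ p v B t₂ x) := by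
  classical
  have hγ1 : γ - 1 ≠ 0 := sub_ne_zero.2 (ne_of_gt hγ)
  have hvi : ∀ i : Fin 3, SmoothS (fun s y => v s y i) := fun i => contDiff_pi.1 hv i
  have hBi : ∀ i : Fin 3, SmoothS (fun s y => B s y i) := fun i => contDiff_pi.1 hB i
  -- smoothness of the energy density
  have hEs : SmoothS (Edens γ ρ p v B) := by
    show ContDiff ℝ (⊤:ℕ∞) fun q : ℝ × V3 => Edens γ ρ p v B q.1 q.2
    simp only [Edens]
    have h1 : ContDiff ℝ (⊤:ℕ∞) (fun q : ℝ × V3 => ρ q.1 q.2 * (∑ i, v q.1 q.2 i ^ 2)) :=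
      hρ.mul (ContDiff.sum fun i _ => (hvi i).pow 2)
    have h2 : ContDiff ℝ (⊤:ℕ∞) (fun q : ℝ × V3 => (∑ i, B q.1 q.2 i ^ 2)) :=
      ContDiff.sum fun i _ => (hBi i).pow 2
    exact ((h1.div_const 2).add (h2.div_const 2)).add (hp.div_const (γ - 1))
  -- support
  have hsv : ∀ t x, x ∉ K → ∀ i, v t x i = 0 := fun t x hx i => by
    rw [(hsupp t x hx).2.2.1]; rfl
  have hsB : ∀ t x, x ∉ K → ∀ i, B t x i = 0 := fun t x hx i => by
    rw [(hsupp t x hx).2.2.2]; rfl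
  have hE0 : ∀ s x, x ∉ K → Edens γ ρ p v B s x = 0 := by
    intro s x hx
    simp only [Edens, (hsupp s x hx).1, (hsupp s x hx).2.1]
    have h1 : ∀ i : Fin 3, v s x i ^ 2 = 0 := fun i => by rw [hsv s x hx i]; ring
    have h2 : ∀ i : Fin 3, B s x i ^ 2 = 0 := fun i => by rw [hsB s x hx i]; ring
    rw [Finset.sum_congr rfl fun i _ => h2 i]
    simp
  have hdtE0 : ∀ s x, x ∉ K → dt (Edens γ ρ p v B) s x = 0 := by
    intro s x hx
    have h1 : (fun s' => Edens γ ρ p v B s' x) = fun _ => (0:ℝ) :=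
      funext fun s' => hE0 s' x hx
    rw [dt, h1, deriv_const]
  -- differentiation under the integral sign
  have key : ∀ t : ℝ, HasDerivAt (fun s => ∫ x : V3, Edens γ ρ p v B s x)
      (∫ x : V3, dt (Edens γ ρ p v B) t x) t := by
    intro t
    have hC : IsCompact ((Set.Icc (t-1) (t+1)) ×ˢ K) := isCompact_Icc.prod hK
    obtain ⟨M, hM⟩ := hC.exists_bound_of_continuousOn hEs.dt_cont.continuousOn
    set bound : V3 → ℝ := K.indicator (fun _ => max M 0) with hbound_def
    have h := hasDerivAt_integral_of_dominated_loc_of_deriv_le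
      (μ := (volume : Measure V3)) (F := fun s x => Edens γ ρ p v B s x)
      (F' := fun s x => dt (Edens γ ρ p v B) s x) (x₀ := t) (bound := bound)
      (Metric.ball_mem_nhds t one_pos)
      (Filter.Eventually.of_forall fun s => ((hEs.slice s).cont).aestronglyMeasurable)
      (integrable_supp hK (hEs.slice t).cont (fun x hx => hE0 t x hx))
      ((hEs.dt_cont.comp (continuous_const.prodMk continuous_id)).aestronglyMeasurable)
      (Filter.Eventually.of_forall ?_) ?_ (Filter.Eventually.of_forall ?_)
    · exact h.2
    · intro x s hs
      show ‖dt (Edens γ ρ p v B) s x‖ ≤ bound x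
      by_cases hx : x ∈ K
      · have hq : (s, x) ∈ (Set.Icc (t-1) (t+1)) ×ˢ K := by
          constructor
          · simp only [Metric.mem_ball, Real.dist_eq] at hs
            constructor <;> [linarith [abs_lt.1 hs]; linarith [abs_lt.1 hs]]
          · exact hx
        have := hM (s, x) hq
        rw [hbound_def, Set.indicator_of_mem hx]
        exact le_trans this (le_max_left _ _)
      · rw [hbound_def, Set.indicator_of_notMem hx, hdtE0 s x hx, norm_zero]
    · rw [hbound_def]
      rw [integrable_indicator_iff hK.measurableSet]
      exact integrableOn_const hK.measure_lt_top.ne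
    · intro x s hs
      exact hEs.hasDerivAt s x
  -- the pointwise PDE identity
  have hpt : ∀ t x, dt (Edens γ ρ p v B) t x
      = ((-(divg (fun y i => ρ t y * v t y i) x)) * ((∑ i, v t x i ^ 2) / 2)
        + (∑ i, v t x i * (cross (curl (B t) x) (B t x) i + ν * lap (fun y => v t y i) x
            - ρ t x * adv (v t) (v t) x i - pd i (p t) x))
        + (∑ i, B t x i * curl (fun y => cross (v t y) (B t y) - η • curl (B t) y) x i)
        + (-(∑ i, v t x i * pd i (p t) x) - ((γ - 1) + 1) * p t x * divg (v t) x) / (γ - 1)) := by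
    intro t x
    have hda : HasDerivAt (fun s => Edens γ ρ p v B s x)
        (((dt ρ t x * (∑ i, v t x i ^ 2)
            + ρ t x * (∑ i, (2:ℕ) * v t x i ^ (2-1) * dt (fun s y => v s y i) t x)) / 2
          + (∑ i, (2:ℕ) * B t x i ^ (2-1) * dt (fun s y => B s y i) t x) / 2)
          + dt p t x / (γ - 1)) t := by
      have h1 : HasDerivAt (fun s => ρ s x * (∑ i, v s x i ^ 2))
          (dt ρ t x * (∑ i, v t x i ^ 2)
            + ρ t x * (∑ i, (2:ℕ) * v t x i ^ (2-1) * dt (fun s y => v s y i) t x)) t :=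
        (hρ.hasDerivAt t x).mul (HasDerivAt.fun_sum fun i _ => ((hvi i).hasDerivAt t x).pow 2)
      have h2 : HasDerivAt (fun s => (∑ i, B s x i ^ 2))
          (∑ i, (2:ℕ) * B t x i ^ (2-1) * dt (fun s y => B s y i) t x) t :=
        HasDerivAt.fun_sum fun i _ => ((hBi i).hasDerivAt t x).pow 2
      exact ((h1.div_const 2).add (h2.div_const 2)).add ((hp.hasDerivAt t x).div_const (γ - 1))
    have hdtE : dt (Edens γ ρ p v B) t x = _ := hda.deriv
    rw [hdtE]
    have hm := hmass t x
    have hmom0 := hmom t x 0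
    have hmom1 := hmom t x 1
    have hmom2 := hmom t x 2
    have hpr := hpres t x
    have hind0 := hind t x 0
    have hind1 := hind t x 1
    have hind2 := hind t x 2
    simp only [adv, divg, dot, lap, curl, cross, Fin.sum_univ_three,
      Matrix.cons_val_zero, Matrix.cons_val_one, Matrix.head_cons, Matrix.cons_val_two,
      Matrix.tail_cons, Pi.sub_apply, Pi.smul_apply, smul_eq_mul, pow_one, Nat.cast_ofNat]
      at hm hmom0 hmom1 hmom2 hpr hind0 hind1 hind2 ⊢
    linear_combination ((v t x 0 ^ 2 + v t x 1 ^ 2 + v t x 2 ^ 2) / 2) * hm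
      + v t x 0 * hmom0 + v t x 1 * hmom1 + v t x 2 * hmom2
      + (1 / (γ - 1)) * hpr
      + B t x 0 * hind0 + B t x 1 * hind1 + B t x 2 * hind2
  -- assemble
  have hmain : ∀ t : ℝ, HasDerivAt (fun s => ∫ x : V3, Edens γ ρ p v B s x)
      (dissip η ν v B t) t := by
    intro t
    have heq : (∫ x : V3, dt (Edens γ ρ p v B) t x) = dissip η ν v B t := by
      rw [integral_congr_ae (Filter.Eventually.of_forall (hpt t))]
      rw [dissip]
      exact spatial hK (γ - 1) η ν hγ1 (ρ t) (p t) (v t) (B t)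
        (hρ.slice t) (hp.slice t) (fun i => (hvi i).slice t) (fun i => (hBi i).slice t)
        (fun x hx => (hsupp t x hx).1) (fun x hx => (hsupp t x hx).2.1)
        (fun x hx => hsv t x hx) (fun x hx => hsB t x hx)
    exact heq ▸ key t
  have hnonpos : ∀ t : ℝ, dissip η ν v B t ≤ 0 := by
    intro t
    have h1 : 0 ≤ ∫ x : V3, ∑ i, curl (B t) x i ^ 2 :=
      integral_nonneg fun x => Finset.sum_nonneg fun i _ => sq_nonneg _
    have h2 : 0 ≤ ∫ x : V3, ∑ i, curl (v t) x i ^ 2 :=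
      integral_nonneg fun x => Finset.sum_nonneg fun i _ => sq_nonneg _
    have h3 : 0 ≤ ∫ x : V3, divg (v t) x ^ 2 := integral_nonneg fun x => sq_nonneg _
    rw [dissip]
    nlinarith [mul_nonneg hη h1, mul_nonneg hν h2, mul_nonneg hν h3]
  refine ⟨fun t => ⟨hmain t, hnonpos t⟩, ?_⟩
  intro hη0 hν0 t₁ t₂
  have hzero : ∀ t : ℝ, dissip η ν v B t = 0 := by
    intro t; rw [dissip, hη0, hν0]; ring
  have hd : ∀ t : ℝ, HasDerivAt (fun s => ∫ x : V3, Edens γ ρ p v B s x) 0 t :=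
    fun t => hzero t ▸ hmain t
  exact is_const_of_deriv_eq_zero (fun t => (hd t).differentiableAt)
    (fun t => (hd t).deriv) t₁ t₂
end
end

section
/- Let F0∈ℝ and let ψ,u be smooth functions of (t,R,φ,Z) on ℝ×{R>0}×ℝ×ℝ satisfying the ideal reduced flux equation ∂_tψ = R[ψ,u] − F0∂_φu. Define B := ((1/R)∂_Zψ)e_R+(F0/R)e_φ+(−(1/R)∂_Rψ)e_Z (i.e. B=(F0/R)e_φ+(1/R)∇ψ×e_φ) and v := (−R∂_Zu)e_R+(R∂_Ru)e_Z (i.e. v=−R∇u×e_φ). Then the ideal induction equation holds componentwise: ∂_tB = ∇×(v×B). -/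
noncomputable section
set_option linter.unusedVariables false

open Real

/-- Scalar fields as functions of `(t, R, φ, Z)`. -/
abbrev F4 := ℝ → ℝ → ℝ → ℝ → ℝ

/-- Partial derivative in time `t`. -/
def dT (f : F4) (t R φ Z : ℝ) : ℝ := deriv (fun s => f s R φ Z) t

/-- Partial derivative in `R`. -/
def dR (f : F4) (t R φ Z : ℝ) : ℝ := deriv (fun r => f t r φ Z) R

/-- Partial derivative in `φ`. -/
def dP (f : F4) (t R φ Z : ℝ) : ℝ := deriv (fun a => f t R a Z) φ

/-- Partial derivative in `Z`. -/
def dZ (f : F4) (t R φ Z : ℝ) : ℝ := deriv (fun z => f t R φ z) Z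

/-- Joint smoothness (C^∞) in `(t,R,φ,Z)`. -/
def Smooth4 (f : F4) : Prop :=
  ContDiff ℝ (⊤ : ℕ∞) fun q : ℝ × ℝ × ℝ × ℝ => f q.1 q.2.1 q.2.2.1 q.2.2.2

/-- Poisson bracket `[a,b] = ∂_R a ∂_Z b − ∂_Z a ∂_R b` (spatial). -/
def pb (a b : F4) (t R φ Z : ℝ) : ℝ :=
  dR a t R φ Z * dZ b t R φ Z - dZ a t R φ Z * dR b t R φ Z

/-- Grad–Shafranov operator `Δ* f = R ∂_R((1/R) ∂_R f) + ∂_ZZ f`. -/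
def GS (f : F4) (t R φ Z : ℝ) : ℝ :=
  R * dR (fun s r a z => (1 / r) * dR f s r a z) t R φ Z + dZ (dZ f) t R φ Z

/-- Poloidal Laplacian `Δ_pol f = (1/R) ∂_R(R ∂_R f) + ∂_ZZ f`. -/
def LapPol (f : F4) (t R φ Z : ℝ) : ℝ :=
  (1 / R) * dR (fun s r a z => r * dR f s r a z) t R φ Z + dZ (dZ f) t R φ Z

/-- Cylindrical divergence `∇·F = (1/R)∂_R(R F_R) + (1/R)∂_φ F_φ + ∂_Z F_Z`. -/
def divC (FR Fφ FZ : F4) (t R φ Z : ℝ) : ℝ :=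
  (1 / R) * dR (fun s r a z => r * FR s r a z) t R φ Z + (1 / R) * dP Fφ t R φ Z
    + dZ FZ t R φ Z

/-- Scalar advection `X·∇f = X_R ∂_R f + (X_φ/R) ∂_φ f + X_Z ∂_Z f`. -/
def advS (XvR XvP XvZ f : F4) (t R φ Z : ℝ) : ℝ :=
  XvR t R φ Z * dR f t R φ Z + XvP t R φ Z / R * dP f t R φ Z + XvZ t R φ Z * dZ f t R φ Z

/-- `e_R`-component of `B = (1/R)∇ψ×e_φ + (F0/R)e_φ`. -/
def BR (ψ : F4) : F4 := fun t R φ Z => (1 / R) * dZ ψ t R φ Z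

/-- `e_φ`-component of the magnetic field. -/
def BP (F0 : ℝ) : F4 := fun _ R _ _ => F0 / R

/-- `e_Z`-component of the magnetic field. -/
def BZ (ψ : F4) : F4 := fun t R φ Z => -(1 / R) * dR ψ t R φ Z

/-- `e_R`-component of `v_pol = −R∇u×e_φ`. -/
def vR (u : F4) : F4 := fun t R φ Z => -R * dZ u t R φ Z

/-- `e_Z`-component of `v_pol = −R∇u×e_φ`. -/
def vZ (u : F4) : F4 := fun t R φ Z => R * dR u t R φ Z

/-- The zero field. -/
def zeroF : F4 := fun _ _ _ _ => 0

/-- `∇_pol a · ∇_pol b`. -/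
def gdot (a b : F4) : F4 := fun t R φ Z =>
  dR a t R φ Z * dR b t R φ Z + dZ a t R φ Z * dZ b t R φ Z

/-- `|B|² = (F0² + (∂_Rψ)² + (∂_Zψ)²)/R²`. -/
def B2 (F0 : ℝ) (ψ : F4) : F4 := fun t R φ Z =>
  (F0 ^ 2 + (dR ψ t R φ Z) ^ 2 + (dZ ψ t R φ Z) ^ 2) / R ^ 2

/-- `|B_pol|² = ((∂_Rψ)² + (∂_Zψ)²)/R²`. -/
def Bpol2 (ψ : F4) : F4 := fun t R φ Z =>
  ((dR ψ t R φ Z) ^ 2 + (dZ ψ t R φ Z) ^ 2) / R ^ 2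

/-- `ρ̂ = R²ρ`. -/
def rh (ρ : F4) : F4 := fun t R φ Z => R ^ 2 * ρ t R φ Z

/-- `|∇_pol u|²`. -/
def gradu2 (u : F4) : F4 := fun t R φ Z => (dR u t R φ Z) ^ 2 + (dZ u t R φ Z) ^ 2

/-- `e_R`-component of `v_pol × B`. -/
def ER (F0 : ℝ) (ψ u : F4) : F4 := fun t R φ Z =>
  vZ u t R φ Z * BP F0 t R φ Z - zeroF t R φ Z * BZ ψ t R φ Z

/-- `e_φ`-component of `v_pol × B`. -/
def EP (ψ u : F4) : F4 := fun t R φ Z =>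
  vR u t R φ Z * BZ ψ t R φ Z - vZ u t R φ Z * BR ψ t R φ Z

/-- `e_Z`-component of `v_pol × B`. -/
def EZc (F0 : ℝ) (ψ u : F4) : F4 := fun t R φ Z =>
  zeroF t R φ Z * BR ψ t R φ Z - vR u t R φ Z * BP F0 t R φ Z

/- ===== Auxiliary infrastructure ===== -/

/-- The ambient space `ℝ⁴`. -/
abbrev E4 := ℝ × ℝ × ℝ × ℝ

/-- A scalar field as a function on `ℝ⁴`. -/
def Fq (f : F4) : E4 → ℝ := fun q => f q.1 q.2.1 q.2.2.1 q.2.2.2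

/-- Directional derivative of a field in direction `v`. -/
def Dv (f : F4) (v : E4) : F4 := fun t R φ Z => fderiv ℝ (Fq f) (t, R, φ, Z) v

def eT4 : E4 := (1, 0, 0, 0)
def eR4 : E4 := (0, 1, 0, 0)
def eP4 : E4 := (0, 0, 1, 0)
def eZ4 : E4 := (0, 0, 0, 1)

lemma lineT_hasDerivAt (t R φ Z : ℝ) :
    HasDerivAt (fun s : ℝ => ((s, R, φ, Z) : E4)) eT4 t :=
  HasDerivAt.prodMk (hasDerivAt_id t) (HasDerivAt.prodMk (hasDerivAt_const t R)
    (HasDerivAt.prodMk (hasDerivAt_const t φ) (hasDerivAt_const t Z)))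

lemma lineR_hasDerivAt (t R φ Z : ℝ) :
    HasDerivAt (fun r : ℝ => ((t, r, φ, Z) : E4)) eR4 R :=
  HasDerivAt.prodMk (hasDerivAt_const R t) (HasDerivAt.prodMk (hasDerivAt_id R)
    (HasDerivAt.prodMk (hasDerivAt_const R φ) (hasDerivAt_const R Z)))

lemma lineP_hasDerivAt (t R φ Z : ℝ) :
    HasDerivAt (fun a : ℝ => ((t, R, a, Z) : E4)) eP4 φ :=
  HasDerivAt.prodMk (hasDerivAt_const φ t) (HasDerivAt.prodMk (hasDerivAt_const φ R)
    (HasDerivAt.prodMk (hasDerivAt_id φ) (hasDerivAt_const φ Z)))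

lemma lineZ_hasDerivAt (t R φ Z : ℝ) :
    HasDerivAt (fun z : ℝ => ((t, R, φ, z) : E4)) eZ4 Z :=
  HasDerivAt.prodMk (hasDerivAt_const Z t) (HasDerivAt.prodMk (hasDerivAt_const Z R)
    (HasDerivAt.prodMk (hasDerivAt_const Z φ) (hasDerivAt_id Z)))

lemma Smooth4.diffFq {f : F4} (hf : Smooth4 f) : Differentiable ℝ (Fq f) :=
  hf.differentiable (by norm_cast)

lemma hasDerivAt_T {f : F4} (hf : Smooth4 f) (t R φ Z : ℝ) :
    HasDerivAt (fun s => f s R φ Z) (Dv f eT4 t R φ Z) t :=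
  by have h := ((hf.diffFq (t, R, φ, Z)).hasFDerivAt).comp_hasDerivAt t (lineT_hasDerivAt t R φ Z); exact h

lemma hasDerivAt_R {f : F4} (hf : Smooth4 f) (t R φ Z : ℝ) :
    HasDerivAt (fun r => f t r φ Z) (Dv f eR4 t R φ Z) R :=
  by have h := ((hf.diffFq (t, R, φ, Z)).hasFDerivAt).comp_hasDerivAt R (lineR_hasDerivAt t R φ Z); exact h

lemma hasDerivAt_P {f : F4} (hf : Smooth4 f) (t R φ Z : ℝ) :
    HasDerivAt (fun a => f t R a Z) (Dv f eP4 t R φ Z) φ :=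
  by have h := ((hf.diffFq (t, R, φ, Z)).hasFDerivAt).comp_hasDerivAt φ (lineP_hasDerivAt t R φ Z); exact h

lemma hasDerivAt_Z {f : F4} (hf : Smooth4 f) (t R φ Z : ℝ) :
    HasDerivAt (fun z => f t R φ z) (Dv f eZ4 t R φ Z) Z :=
  by have h := ((hf.diffFq (t, R, φ, Z)).hasFDerivAt).comp_hasDerivAt Z (lineZ_hasDerivAt t R φ Z); exact h

lemma diffT {f : F4} (hf : Smooth4 f) (t R φ Z : ℝ) :
    DifferentiableAt ℝ (fun s => f s R φ Z) t := (hasDerivAt_T hf t R φ Z).differentiableAt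
lemma diffR {f : F4} (hf : Smooth4 f) (t R φ Z : ℝ) :
    DifferentiableAt ℝ (fun r => f t r φ Z) R := (hasDerivAt_R hf t R φ Z).differentiableAt
lemma diffP {f : F4} (hf : Smooth4 f) (t R φ Z : ℝ) :
    DifferentiableAt ℝ (fun a => f t R a Z) φ := (hasDerivAt_P hf t R φ Z).differentiableAt
lemma diffZ {f : F4} (hf : Smooth4 f) (t R φ Z : ℝ) :
    DifferentiableAt ℝ (fun z => f t R φ z) Z := (hasDerivAt_Z hf t R φ Z).differentiableAt

lemma dT_eq {f : F4} (hf : Smooth4 f) : dT f = Dv f eT4 :=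
  funext fun t => funext fun R => funext fun φ => funext fun Z =>
    (hasDerivAt_T hf t R φ Z).deriv
lemma dR_eq {f : F4} (hf : Smooth4 f) : dR f = Dv f eR4 :=
  funext fun t => funext fun R => funext fun φ => funext fun Z =>
    (hasDerivAt_R hf t R φ Z).deriv
lemma dP_eq {f : F4} (hf : Smooth4 f) : dP f = Dv f eP4 :=
  funext fun t => funext fun R => funext fun φ => funext fun Z =>
    (hasDerivAt_P hf t R φ Z).deriv
lemma dZ_eq {f : F4} (hf : Smooth4 f) : dZ f = Dv f eZ4 :=
  funext fun t => funext fun R => funext fun φ => funext fun Z =>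
    (hasDerivAt_Z hf t R φ Z).deriv

lemma smooth_Dv {f : F4} (hf : Smooth4 f) (v : E4) : Smooth4 (Dv f v) := by
  have h : ContDiff ℝ (⊤ : ℕ∞) (fderiv ℝ (Fq f)) := hf.fderiv_right (by norm_cast)
  exact (ContinuousLinearMap.apply ℝ ℝ v).contDiff.comp h

lemma Dv_Dv {f : F4} (hf : Smooth4 f) (v w : E4) (t R φ Z : ℝ) :
    Dv (Dv f v) w t R φ Z = fderiv ℝ (fderiv ℝ (Fq f)) (t, R, φ, Z) w v := by
  have hd : DifferentiableAt ℝ (fderiv ℝ (Fq f)) (t, R, φ, Z) :=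
    ((hf.fderiv_right (m := (⊤ : ℕ∞)) (by norm_cast)).differentiable
      (by norm_cast)).differentiableAt
  have h1 : Fq (Dv f v) = fun q => (fderiv ℝ (Fq f) q) v := rfl
  show fderiv ℝ (Fq (Dv f v)) (t, R, φ, Z) w = _
  rw [h1, fderiv_clm_apply hd (differentiableAt_const v)]
  simp

lemma Dv_comm {f : F4} (hf : Smooth4 f) (v w : E4) (t R φ Z : ℝ) :
    Dv (Dv f v) w t R φ Z = Dv (Dv f w) v t R φ Z := by
  rw [Dv_Dv hf v w, Dv_Dv hf w v]
  exact hf.contDiffAt.isSymmSndFDerivAt (by simp [minSmoothness_of_isRCLikeNormedField]; norm_cast) w v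

lemma comm4 {f : F4} (hf : Smooth4 f) (d1 d2 : F4 → F4) (v1 v2 : E4)
    (h1 : ∀ g : F4, Smooth4 g → d1 g = Dv g v1)
    (h2 : ∀ g : F4, Smooth4 g → d2 g = Dv g v2) :
    d1 (d2 f) = d2 (d1 f) := by
  rw [h2 f hf, h1 f hf, h1 _ (smooth_Dv hf v2), h2 _ (smooth_Dv hf v1)]
  funext t R φ Z
  exact Dv_comm hf v2 v1 t R φ Z

lemma dT_dZ_comm {f : F4} (hf : Smooth4 f) : dT (dZ f) = dZ (dT f) :=
  comm4 hf dT dZ eT4 eZ4 (fun _ h => dT_eq h) (fun _ h => dZ_eq h)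
lemma dT_dR_comm {f : F4} (hf : Smooth4 f) : dT (dR f) = dR (dT f) :=
  comm4 hf dT dR eT4 eR4 (fun _ h => dT_eq h) (fun _ h => dR_eq h)
lemma dZ_dP_comm {f : F4} (hf : Smooth4 f) : dZ (dP f) = dP (dZ f) :=
  comm4 hf dZ dP eZ4 eP4 (fun _ h => dZ_eq h) (fun _ h => dP_eq h)
lemma dZ_dR_comm {f : F4} (hf : Smooth4 f) : dZ (dR f) = dR (dZ f) :=
  comm4 hf dZ dR eZ4 eR4 (fun _ h => dZ_eq h) (fun _ h => dR_eq h)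
lemma dR_dP_comm {f : F4} (hf : Smooth4 f) : dR (dP f) = dP (dR f) :=
  comm4 hf dR dP eR4 eP4 (fun _ h => dR_eq h) (fun _ h => dP_eq h)

lemma smooth_dT {f : F4} (hf : Smooth4 f) : Smooth4 (dT f) := by
  rw [dT_eq hf]; exact smooth_Dv hf eT4
lemma smooth_dR {f : F4} (hf : Smooth4 f) : Smooth4 (dR f) := by
  rw [dR_eq hf]; exact smooth_Dv hf eR4
lemma smooth_dP {f : F4} (hf : Smooth4 f) : Smooth4 (dP f) := by
  rw [dP_eq hf]; exact smooth_Dv hf eP4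
lemma smooth_dZ {f : F4} (hf : Smooth4 f) : Smooth4 (dZ f) := by
  rw [dZ_eq hf]; exact smooth_Dv hf eZ4

lemma s4_mul {a b : F4} (ha : Smooth4 a) (hb : Smooth4 b) :
    Smooth4 (fun t R φ Z => a t R φ Z * b t R φ Z) := ha.mul hb
lemma s4_sub {a b : F4} (ha : Smooth4 a) (hb : Smooth4 b) :
    Smooth4 (fun t R φ Z => a t R φ Z - b t R φ Z) := ha.sub hb

lemma smooth_pb {a b : F4} (ha : Smooth4 a) (hb : Smooth4 b) : Smooth4 (pb a b) :=
  s4_sub (s4_mul (smooth_dR ha) (smooth_dZ hb))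
    (s4_mul (smooth_dZ ha) (smooth_dR hb))

/-- if `∂_tψ = R[ψ,u] − F0 ∂_φ u` then the ideal induction equation
`∂_t B = ∇×(v_pol × B)` holds componentwise (in the left-handed cylindrical frame). -/
theorem ideal_induction_equation (F0 : ℝ) (ψ u : F4) (hψ : Smooth4 ψ) (hu : Smooth4 u)
    (hflux : ∀ t R φ Z : ℝ, 0 < R →
      dT ψ t R φ Z = R * pb ψ u t R φ Z - F0 * dP u t R φ Z) :
    ∀ t R φ Z : ℝ, 0 < R →
      (dT (BR ψ) t R φ Z
          = dZ (EP ψ u) t R φ Z - (1 / R) * dP (EZc F0 ψ u) t R φ Z) ∧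
      (dT (BP F0) t R φ Z
          = dR (EZc F0 ψ u) t R φ Z - dZ (ER F0 ψ u) t R φ Z) ∧
      (dT (BZ ψ) t R φ Z
          = (1 / R) * dP (ER F0 ψ u) t R φ Z
            - (1 / R) * dR (fun s r a z => r * EP ψ u s r a z) t R φ Z) := by
  intro t R φ Z hR
  have hR0 : R ≠ 0 := ne_of_gt hR
  have hP : Smooth4 (pb ψ u) := smooth_pb hψ hu
  have hdZψ : Smooth4 (dZ ψ) := smooth_dZ hψ
  have hdRψ : Smooth4 (dR ψ) := smooth_dR hψ
  have hdPu : Smooth4 (dP u) := smooth_dP hu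
  have hdZu : Smooth4 (dZ u) := smooth_dZ hu
  have hdRu : Smooth4 (dR u) := smooth_dR hu
  -- derivative of the flux equation in Z
  have e2 : dZ (dT ψ) t R φ Z
      = R * dZ (pb ψ u) t R φ Z - F0 * dZ (dP u) t R φ Z := by
    have hfun : (fun z => dT ψ t R φ z)
        = fun z => R * pb ψ u t R φ z - F0 * dP u t R φ z :=
      funext fun z => hflux t R φ z hR
    show deriv (fun z => dT ψ t R φ z) Z = _
    rw [hfun, deriv_fun_sub ((diffZ hP t R φ Z).const_mul R)
        ((diffZ hdPu t R φ Z).const_mul F0),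
      deriv_const_mul _ (diffZ hP t R φ Z), deriv_const_mul _ (diffZ hdPu t R φ Z)]
    rfl
  -- derivative of the flux equation in R
  have e8 : dR (dT ψ) t R φ Z
      = pb ψ u t R φ Z + R * dR (pb ψ u) t R φ Z - F0 * dR (dP u) t R φ Z := by
    have hev : (fun r => dT ψ t r φ Z)
        =ᶠ[nhds R] fun r => r * pb ψ u t r φ Z - F0 * dP u t r φ Z := by
      filter_upwards [eventually_gt_nhds hR] with r hr
      exact hflux t r φ Z hr
    have h1 : HasDerivAt (fun r => r * pb ψ u t r φ Z)
        (1 * pb ψ u t R φ Z + R * dR (pb ψ u) t R φ Z) R :=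
      (hasDerivAt_id R).mul ((diffR hP t R φ Z).hasDerivAt)
    have h2 : HasDerivAt (fun r => F0 * dP u t r φ Z)
        (F0 * dR (dP u) t R φ Z) R :=
      ((diffR hdPu t R φ Z).hasDerivAt).const_mul F0
    show deriv (fun r => dT ψ t r φ Z) R = _
    rw [hev.deriv_eq, (h1.fun_sub h2).deriv]
    ring
  refine ⟨?_, ?_, ?_⟩
  · -- e_R component
    have e1 : dT (BR ψ) t R φ Z = (1 / R) * dZ (dT ψ) t R φ Z := by
      show deriv (fun s => (1 / R) * dZ ψ s R φ Z) t = _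
      rw [deriv_const_mul _ (diffT hdZψ t R φ Z)]
      have : deriv (fun s => dZ ψ s R φ Z) t = dT (dZ ψ) t R φ Z := rfl
      rw [this, dT_dZ_comm hψ]
    have e3 : dZ (EP ψ u) t R φ Z = dZ (pb ψ u) t R φ Z := by
      have hfun : (fun z => EP ψ u t R φ z) = fun z => pb ψ u t R φ z := by
        funext z
        simp only [EP, vR, BZ, vZ, BR, pb]
        field_simp
      show deriv (fun z => EP ψ u t R φ z) Z = _
      rw [hfun]; rfl
    have e4 : dP (EZc F0 ψ u) t R φ Z = F0 * dP (dZ u) t R φ Z := by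
      have hfun : (fun a => EZc F0 ψ u t R a Z) = fun a => F0 * dZ u t R a Z := by
        funext a
        simp only [EZc, zeroF, BR, vR, BP]
        field_simp
        ring
      show deriv (fun a => EZc F0 ψ u t R a Z) φ = _
      rw [hfun, deriv_const_mul _ (diffP hdZu t R φ Z)]
      rfl
    have hc : dZ (dP u) t R φ Z = dP (dZ u) t R φ Z := by rw [dZ_dP_comm hu]
    rw [e1, e2, e3, e4, hc]
    field_simp
  · -- e_φ component
    have l2 : dT (BP F0) t R φ Z = 0 := by
      show deriv (fun _ : ℝ => F0 / R) t = 0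
      exact deriv_const t _
    have e5 : dR (EZc F0 ψ u) t R φ Z = F0 * dR (dZ u) t R φ Z := by
      have hev : (fun r => EZc F0 ψ u t r φ Z) =ᶠ[nhds R] fun r => F0 * dZ u t r φ Z := by
        filter_upwards [eventually_ne_nhds hR0] with r hr
        simp only [EZc, zeroF, BR, vR, BP]
        field_simp
        ring
      show deriv (fun r => EZc F0 ψ u t r φ Z) R = _
      rw [hev.deriv_eq, deriv_const_mul _ (diffR hdZu t R φ Z)]
      rfl
    have e6 : dZ (ER F0 ψ u) t R φ Z = F0 * dZ (dR u) t R φ Z := by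
      have hfun : (fun z => ER F0 ψ u t R φ z) = fun z => F0 * dR u t R φ z := by
        funext z
        simp only [ER, vZ, BP, zeroF, BZ]
        field_simp
        ring
      show deriv (fun z => ER F0 ψ u t R φ z) Z = _
      rw [hfun, deriv_const_mul _ (diffZ hdRu t R φ Z)]
      rfl
    have hc : dZ (dR u) t R φ Z = dR (dZ u) t R φ Z := by rw [dZ_dR_comm hu]
    rw [l2, e5, e6, hc]
    ring
  · -- e_Z component
    have e7 : dT (BZ ψ) t R φ Z = -(1 / R) * dR (dT ψ) t R φ Z := by
      show deriv (fun s => -(1 / R) * dR ψ s R φ Z) t = _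
      rw [deriv_const_mul _ (diffT hdRψ t R φ Z)]
      have : deriv (fun s => dR ψ s R φ Z) t = dT (dR ψ) t R φ Z := rfl
      rw [this, dT_dR_comm hψ]
    have e9 : dP (ER F0 ψ u) t R φ Z = F0 * dP (dR u) t R φ Z := by
      have hfun : (fun a => ER F0 ψ u t R a Z) = fun a => F0 * dR u t R a Z := by
        funext a
        simp only [ER, vZ, BP, zeroF, BZ]
        field_simp
        ring
      show deriv (fun a => ER F0 ψ u t R a Z) φ = _
      rw [hfun, deriv_const_mul _ (diffP hdRu t R φ Z)]
      rfl
    have e10 : dR (fun s r a z => r * EP ψ u s r a z) t R φ Z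
        = pb ψ u t R φ Z + R * dR (pb ψ u) t R φ Z := by
      have hev : (fun r => r * EP ψ u t r φ Z) =ᶠ[nhds R] fun r => r * pb ψ u t r φ Z := by
        filter_upwards [eventually_ne_nhds hR0] with r hr
        simp only [EP, vR, BZ, vZ, BR, pb]
        field_simp
      have h1 : HasDerivAt (fun r => r * pb ψ u t r φ Z)
          (1 * pb ψ u t R φ Z + R * dR (pb ψ u) t R φ Z) R :=
        (hasDerivAt_id R).mul ((diffR hP t R φ Z).hasDerivAt)
      show deriv (fun r => r * EP ψ u t r φ Z) R = _
      rw [hev.deriv_eq, h1.deriv]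
      ring
    have hc : dR (dP u) t R φ Z = dP (dR u) t R φ Z := by rw [dR_dP_comm hu]
    rw [e7, e8, e9, e10, hc]
    field_simp
    ring
end
end

section
/- Let F0∈ℝ and let ψ,v∥,ρ be smooth functions of (t,R,φ,Z) on ℝ×{R>0}×ℝ×ℝ, and set B := ((1/R)∂_Zψ)e_R+(F0/R)e_φ+(−(1/R)∂_Rψ)e_Z. Then at every point, e_φ·∇×(R²ρ ∂_t(v∥B)) = −R ∇·(ρ ∂_t(v∥∇_polψ)), where ∂_t(v∥B) is the componentwise time derivative of the vector field v∥B (F0 being constant), and v∥∇_polψ is the vector field (v∥∂_Rψ)e_R+(v∥∂_Zψ)e_Z with zero φ-component. -/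
noncomputable section
set_option linter.unusedVariables false

open Real

/-- `e_φ·∇×(R²ρ ∂_t(v∥B)) = −R ∇·(ρ ∂_t(v∥ ∇_pol ψ))`. -/
theorem curl_phi_of_parallel_inertia (F0 : ℝ) (ψ vpar ρ : F4)
    (hψ : Smooth4 ψ) (hv : Smooth4 vpar) (hρ : Smooth4 ρ) :
    ∀ t R φ Z : ℝ, 0 < R →
      dR (fun s r a z => r ^ 2 * ρ s r a z
            * dT (fun s' r' a' z' => vpar s' r' a' z' * BZ ψ s' r' a' z') s r a z) t R φ Z
        - dZ (fun s r a z => r ^ 2 * ρ s r a z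
            * dT (fun s' r' a' z' => vpar s' r' a' z' * BR ψ s' r' a' z') s r a z) t R φ Z
      = -R * divC
          (fun s r a z => ρ s r a z
            * dT (fun s' r' a' z' => vpar s' r' a' z' * dR ψ s' r' a' z') s r a z)
          zeroF
          (fun s r a z => ρ s r a z
            * dT (fun s' r' a' z' => vpar s' r' a' z' * dZ ψ s' r' a' z') s r a z)
          t R φ Z := by
  intro t R φ Z hR
  have hR0 : R ≠ 0 := ne_of_gt hR
  have e1 : (fun s r a z => r ^ 2 * ρ s r a z
        * dT (fun s' r' a' z' => vpar s' r' a' z' * BZ ψ s' r' a' z') s r a z)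
      = (fun s r a z => -(r * (ρ s r a z
          * dT (fun s' r' a' z' => vpar s' r' a' z' * dR ψ s' r' a' z') s r a z))) := by
    funext s r a z
    have h : (fun s'' => vpar s'' r a z * BZ ψ s'' r a z)
        = fun s'' => (-(1/r)) * (vpar s'' r a z * dR ψ s'' r a z) := by
      funext s''; simp only [BZ]; ring
    simp only [dT, h, deriv_const_mul_field]
    rcases eq_or_ne r 0 with h0 | h0
    · simp [h0]
    · field_simp
  have e2 : (fun s r a z => r ^ 2 * ρ s r a z
        * dT (fun s' r' a' z' => vpar s' r' a' z' * BR ψ s' r' a' z') s r a z)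
      = (fun s r a z => r * (ρ s r a z
          * dT (fun s' r' a' z' => vpar s' r' a' z' * dZ ψ s' r' a' z') s r a z)) := by
    funext s r a z
    have h : (fun s'' => vpar s'' r a z * BR ψ s'' r a z)
        = fun s'' => (1/r) * (vpar s'' r a z * dZ ψ s'' r a z) := by
      funext s''; simp only [BR]; ring
    simp only [dT, h, deriv_const_mul_field]
    rcases eq_or_ne r 0 with h0 | h0
    · simp [h0]
    · field_simp
  rw [e1, e2]
  simp only [divC, dR, dZ, dP, zeroF, deriv_const, deriv.fun_neg, deriv_const_mul_field]
  field_simp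
  ring
end
end

section
/- Let F0∈ℝ, γ∈ℝ, and let ψ,u,v∥,p be smooth on {R>0}×ℝ_φ×ℝ_Z. Set B := ((1/R)∂_Zψ)e_R+(F0/R)e_φ+(−(1/R)∂_Rψ)e_Z and v := (−R∂_Zu)e_R+(R∂_Ru)e_Z + v∥B. Then v·∇p + γp∇·v = −R[p,u] − 2γp∂_Zu + (v∥F0/R²)∂_φp + (v∥/R)[p,ψ] + (γp/R)[v∥,ψ] + (γpF0/R²)∂_φv∥; equivalently, any p with ∂_tp = −v·∇p − γp∇·v satisfies ∂_tp = R[p,u] + 2γp∂_Zu − (v∥F0/R²)∂_φp − (v∥/R)[p,ψ] − (γp/R)[v∥,ψ] − (γpF0/R²)∂_φv∥. -/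
noncomputable section
set_option linter.unusedVariables false

open Real

/-- `e_R`-component of the total velocity `v = v_pol + v∥B`. -/
def vtotR (ψ u vpar : F4) : F4 := fun t R φ Z =>
  vR u t R φ Z + vpar t R φ Z * BR ψ t R φ Z

/-- `e_φ`-component of the total velocity. -/
def vtotP (F0 : ℝ) (vpar : F4) : F4 := fun t R φ Z => vpar t R φ Z * BP F0 t R φ Z

/-- `e_Z`-component of the total velocity. -/
def vtotZ (ψ u vpar : F4) : F4 := fun t R φ Z =>
  vZ u t R φ Z + vpar t R φ Z * BZ ψ t R φ Z

namespace Aux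

def toF (f : F4) : ℝ × ℝ × ℝ × ℝ → ℝ := fun q => f q.1 q.2.1 q.2.2.1 q.2.2.2

lemma smooth_toF {f : F4} (hf : Smooth4 f) : ContDiff ℝ (⊤ : ℕ∞) (toF f) := hf

lemma sliceR (t R φ Z : ℝ) :
    HasDerivAt (fun r => ((t, r, φ, Z) : ℝ × ℝ × ℝ × ℝ)) (0, 1, 0, 0) R :=
  (hasDerivAt_const R t).prodMk ((hasDerivAt_id R).prodMk
    ((hasDerivAt_const R φ).prodMk (hasDerivAt_const R Z)))

lemma sliceP (t R φ Z : ℝ) :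
    HasDerivAt (fun a => ((t, R, a, Z) : ℝ × ℝ × ℝ × ℝ)) (0, 0, 1, 0) φ :=
  (hasDerivAt_const φ t).prodMk ((hasDerivAt_const φ R).prodMk
    ((hasDerivAt_id φ).prodMk (hasDerivAt_const φ Z)))

lemma sliceZ (t R φ Z : ℝ) :
    HasDerivAt (fun z => ((t, R, φ, z) : ℝ × ℝ × ℝ × ℝ)) (0, 0, 0, 1) Z :=
  (hasDerivAt_const Z t).prodMk ((hasDerivAt_const Z R).prodMk
    ((hasDerivAt_const Z φ).prodMk (hasDerivAt_id Z)))

lemma hasDerivAt_R' {f : F4} (hf : Smooth4 f) (t R φ Z : ℝ) :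
    HasDerivAt (fun r => f t r φ Z) (fderiv ℝ (toF f) (t, R, φ, Z) (0, 1, 0, 0)) R :=
  (((smooth_toF hf).differentiable (by simp) (t, R, φ, Z)).hasFDerivAt).comp_hasDerivAt (l := toF f) R (sliceR t R φ Z)

lemma hasDerivAt_P' {f : F4} (hf : Smooth4 f) (t R φ Z : ℝ) :
    HasDerivAt (fun a => f t R a Z) (fderiv ℝ (toF f) (t, R, φ, Z) (0, 0, 1, 0)) φ :=
  (((smooth_toF hf).differentiable (by simp) (t, R, φ, Z)).hasFDerivAt).comp_hasDerivAt (l := toF f) φ (sliceP t R φ Z)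

lemma hasDerivAt_Z' {f : F4} (hf : Smooth4 f) (t R φ Z : ℝ) :
    HasDerivAt (fun z => f t R φ z) (fderiv ℝ (toF f) (t, R, φ, Z) (0, 0, 0, 1)) Z :=
  (((smooth_toF hf).differentiable (by simp) (t, R, φ, Z)).hasFDerivAt).comp_hasDerivAt (l := toF f) Z (sliceZ t R φ Z)

lemma dR_eq {f : F4} (hf : Smooth4 f) (t R φ Z : ℝ) :
    dR f t R φ Z = fderiv ℝ (toF f) (t, R, φ, Z) (0, 1, 0, 0) :=
  (hasDerivAt_R' hf t R φ Z).deriv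

lemma dP_eq {f : F4} (hf : Smooth4 f) (t R φ Z : ℝ) :
    dP f t R φ Z = fderiv ℝ (toF f) (t, R, φ, Z) (0, 0, 1, 0) :=
  (hasDerivAt_P' hf t R φ Z).deriv

lemma dZ_eq {f : F4} (hf : Smooth4 f) (t R φ Z : ℝ) :
    dZ f t R φ Z = fderiv ℝ (toF f) (t, R, φ, Z) (0, 0, 0, 1) :=
  (hasDerivAt_Z' hf t R φ Z).deriv

lemma hasDerivAt_R {f : F4} (hf : Smooth4 f) (t R φ Z : ℝ) :
    HasDerivAt (fun r => f t r φ Z) (dR f t R φ Z) R := by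
  rw [dR_eq hf]; exact hasDerivAt_R' hf t R φ Z

lemma hasDerivAt_P {f : F4} (hf : Smooth4 f) (t R φ Z : ℝ) :
    HasDerivAt (fun a => f t R a Z) (dP f t R φ Z) φ := by
  rw [dP_eq hf]; exact hasDerivAt_P' hf t R φ Z

lemma hasDerivAt_Z {f : F4} (hf : Smooth4 f) (t R φ Z : ℝ) :
    HasDerivAt (fun z => f t R φ z) (dZ f t R φ Z) Z := by
  rw [dZ_eq hf]; exact hasDerivAt_Z' hf t R φ Z

lemma fderiv_smooth {f : F4} (hf : Smooth4 f) :
    ContDiff ℝ (⊤ : ℕ∞) (fderiv ℝ (toF f)) :=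
  (smooth_toF hf).fderiv_right (by exact_mod_cast le_top)

lemma smooth_dir {f : F4} (hf : Smooth4 f) (v : ℝ × ℝ × ℝ × ℝ) :
    ContDiff ℝ (⊤ : ℕ∞) (fun q => fderiv ℝ (toF f) q v) :=
  (fderiv_smooth hf).clm_apply contDiff_const

lemma smooth_dR {f : F4} (hf : Smooth4 f) : Smooth4 (dR f) := by
  have : (fun q : ℝ × ℝ × ℝ × ℝ => dR f q.1 q.2.1 q.2.2.1 q.2.2.2)
      = fun q => fderiv ℝ (toF f) q (0, 1, 0, 0) := by
    funext q; exact dR_eq hf q.1 q.2.1 q.2.2.1 q.2.2.2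
  unfold Smooth4; rw [this]; exact smooth_dir hf _

lemma smooth_dP {f : F4} (hf : Smooth4 f) : Smooth4 (dP f) := by
  have : (fun q : ℝ × ℝ × ℝ × ℝ => dP f q.1 q.2.1 q.2.2.1 q.2.2.2)
      = fun q => fderiv ℝ (toF f) q (0, 0, 1, 0) := by
    funext q; exact dP_eq hf q.1 q.2.1 q.2.2.1 q.2.2.2
  unfold Smooth4; rw [this]; exact smooth_dir hf _

lemma smooth_dZ {f : F4} (hf : Smooth4 f) : Smooth4 (dZ f) := by
  have : (fun q : ℝ × ℝ × ℝ × ℝ => dZ f q.1 q.2.1 q.2.2.1 q.2.2.2)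
      = fun q => fderiv ℝ (toF f) q (0, 0, 0, 1) := by
    funext q; exact dZ_eq hf q.1 q.2.1 q.2.2.1 q.2.2.2
  unfold Smooth4; rw [this]; exact smooth_dir hf _

lemma fderiv_dir_apply {f : F4} (hf : Smooth4 f) (q : ℝ × ℝ × ℝ × ℝ)
    (v w : ℝ × ℝ × ℝ × ℝ) :
    fderiv ℝ (fun x => fderiv ℝ (toF f) x v) q w
      = fderiv ℝ (fderiv ℝ (toF f)) q w v := by
  have hc : DifferentiableAt ℝ (fderiv ℝ (toF f)) q :=
    ((fderiv_smooth hf).differentiable (by simp)) q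
  rw [fderiv_clm_apply hc (differentiableAt_const v)]
  simp

lemma mixed {f : F4} (hf : Smooth4 f) (t R φ Z : ℝ) :
    dR (dZ f) t R φ Z = dZ (dR f) t R φ Z := by
  have hsym : IsSymmSndFDerivAt ℝ (toF f) (t, R, φ, Z) :=
    (smooth_toF hf).contDiffAt.isSymmSndFDerivAt (by rw [minSmoothness_of_isRCLikeNormedField]; exact WithTop.coe_le_coe.2 (le_top : (2 : ℕ∞) ≤ ⊤))
  have h1 : dR (dZ f) t R φ Z
      = fderiv ℝ (fderiv ℝ (toF f)) (t, R, φ, Z) (0, 1, 0, 0) (0, 0, 0, 1) := by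
    rw [dR_eq (smooth_dZ hf)]
    have : toF (dZ f) = fun q => fderiv ℝ (toF f) q (0, 0, 0, 1) := by
      funext q; exact dZ_eq hf q.1 q.2.1 q.2.2.1 q.2.2.2
    rw [this, fderiv_dir_apply hf]
  have h2 : dZ (dR f) t R φ Z
      = fderiv ℝ (fderiv ℝ (toF f)) (t, R, φ, Z) (0, 0, 0, 1) (0, 1, 0, 0) := by
    rw [dZ_eq (smooth_dR hf)]
    have : toF (dR f) = fun q => fderiv ℝ (toF f) q (0, 1, 0, 0) := by
      funext q; exact dR_eq hf q.1 q.2.1 q.2.2.1 q.2.2.2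
    rw [this, fderiv_dir_apply hf]
  rw [h1, h2, hsym (0, 1, 0, 0) (0, 0, 0, 1)]

end Aux


/-- the advection–compression combination for the pressure, and the
resulting evolution form of the pressure equation. -/
theorem pressure_advection_compression (F0 γ : ℝ) (ψ u vpar p : F4)
    (hψ : Smooth4 ψ) (hu : Smooth4 u) (hv : Smooth4 vpar) (hp : Smooth4 p) :
    (∀ t R φ Z : ℝ, 0 < R →
      advS (vtotR ψ u vpar) (vtotP F0 vpar) (vtotZ ψ u vpar) p t R φ Z
        + γ * p t R φ Z * divC (vtotR ψ u vpar) (vtotP F0 vpar) (vtotZ ψ u vpar) t R φ Z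
      = -R * pb p u t R φ Z - 2 * γ * p t R φ Z * dZ u t R φ Z
        + (vpar t R φ Z * F0 / R ^ 2) * dP p t R φ Z
        + (vpar t R φ Z / R) * pb p ψ t R φ Z
        + (γ * p t R φ Z / R) * pb vpar ψ t R φ Z
        + (γ * p t R φ Z * F0 / R ^ 2) * dP vpar t R φ Z) ∧
    ((∀ t R φ Z : ℝ, 0 < R →
        dT p t R φ Z
          = -advS (vtotR ψ u vpar) (vtotP F0 vpar) (vtotZ ψ u vpar) p t R φ Z
            - γ * p t R φ Z
              * divC (vtotR ψ u vpar) (vtotP F0 vpar) (vtotZ ψ u vpar) t R φ Z) →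
      ∀ t R φ Z : ℝ, 0 < R →
        dT p t R φ Z
          = R * pb p u t R φ Z + 2 * γ * p t R φ Z * dZ u t R φ Z
            - (vpar t R φ Z * F0 / R ^ 2) * dP p t R φ Z
            - (vpar t R φ Z / R) * pb p ψ t R φ Z
            - (γ * p t R φ Z / R) * pb vpar ψ t R φ Z
            - (γ * p t R φ Z * F0 / R ^ 2) * dP vpar t R φ Z) := by
  have main : ∀ t R φ Z : ℝ, 0 < R →
      advS (vtotR ψ u vpar) (vtotP F0 vpar) (vtotZ ψ u vpar) p t R φ Z
        + γ * p t R φ Z * divC (vtotR ψ u vpar) (vtotP F0 vpar) (vtotZ ψ u vpar) t R φ Z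
      = -R * pb p u t R φ Z - 2 * γ * p t R φ Z * dZ u t R φ Z
        + (vpar t R φ Z * F0 / R ^ 2) * dP p t R φ Z
        + (vpar t R φ Z / R) * pb p ψ t R φ Z
        + (γ * p t R φ Z / R) * pb vpar ψ t R φ Z
        + (γ * p t R φ Z * F0 / R ^ 2) * dP vpar t R φ Z := by
    intro t R φ Z hR
    have hR0 : R ≠ 0 := ne_of_gt hR
    have h1 : dR (fun s r a z => r * vtotR ψ u vpar s r a z) t R φ Z
        = (-(1 * R + R * 1) * dZ u t R φ Z + -(R * R) * dR (dZ u) t R φ Z)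
          + (dR vpar t R φ Z * dZ ψ t R φ Z + vpar t R φ Z * dR (dZ ψ) t R φ Z) := by
      have hev : (fun r => r * vtotR ψ u vpar t r φ Z)
          =ᶠ[nhds R] fun r => -(r * r) * dZ u t r φ Z + vpar t r φ Z * dZ ψ t r φ Z := by
        filter_upwards [eventually_ne_nhds hR0] with r hr
        simp only [vtotR, vR, BR]
        field_simp
      show deriv (fun r => r * vtotR ψ u vpar t r φ Z) R = _
      rw [hev.deriv_eq]
      exact ((((hasDerivAt_id R).mul (hasDerivAt_id R)).neg.mul
          (Aux.hasDerivAt_R (Aux.smooth_dZ hu) t R φ Z)).add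
        ((Aux.hasDerivAt_R hv t R φ Z).mul
          (Aux.hasDerivAt_R (Aux.smooth_dZ hψ) t R φ Z))).deriv
    have h2 : dP (vtotP F0 vpar) t R φ Z = dP vpar t R φ Z * (F0 / R) := by
      show deriv (fun a => vpar t R a Z * (F0 / R)) φ = _
      exact ((Aux.hasDerivAt_P hv t R φ Z).mul_const (F0 / R)).deriv
    have h3 : dZ (vtotZ ψ u vpar) t R φ Z
        = R * dZ (dR u) t R φ Z
          + (dZ vpar t R φ Z * (-(1 / R) * dR ψ t R φ Z)
             + vpar t R φ Z * (-(1 / R) * dZ (dR ψ) t R φ Z)) := by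
      show deriv
          (fun z => R * dR u t R φ z + vpar t R φ z * (-(1 / R) * dR ψ t R φ z)) Z = _
      exact ((HasDerivAt.const_mul R (Aux.hasDerivAt_Z (Aux.smooth_dR hu) t R φ Z)).add
        ((Aux.hasDerivAt_Z hv t R φ Z).mul
          (HasDerivAt.const_mul (-(1 / R))
            (Aux.hasDerivAt_Z (Aux.smooth_dR hψ) t R φ Z)))).deriv
    rw [advS, divC, h1, h2, h3]
    simp only [vtotR, vtotP, vtotZ, vR, vZ, BR, BP, BZ, pb]
    rw [Aux.mixed hu t R φ Z, Aux.mixed hψ t R φ Z]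
    field_simp
    ring
  refine ⟨main, ?_⟩
  intro hyp t R φ Z hR
  have h := main t R φ Z hR
  rw [hyp t R φ Z hR]
  linarith [h]
end
end

section
/- Let F0∈ℝ and let ψ,u be smooth functions of (t,R,φ,Z) on ℝ×{R>0}×ℝ×ℝ, 2π-periodic in φ, with ψ(t,·) and u(t,·) supported (in the (R,Z)-variables) in a fixed compact subset K of the half-plane {R>0} for all t, satisfying the ideal reduced flux equation ∂_tψ = R[ψ,u] − F0∂_φu. Then the magnetic helicity t ↦ ∫_0^{2π}∫_K (ψ/R²) R dR dZ dφ is constant in time. -/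
noncomputable section
set_option linter.unusedVariables false

open Real

open MeasureTheory


namespace HelicityAux

open MeasureTheory Set Metric

abbrev E4 := ℝ × ℝ × ℝ × ℝ

def Fq (f : F4) : E4 → ℝ := fun q => f q.1 q.2.1 q.2.2.1 q.2.2.2

def eT : E4 := (1,0,0,0)
def eR : E4 := (0,1,0,0)
def eP : E4 := (0,0,1,0)
def eZ : E4 := (0,0,0,1)

variable {F : Type*} [NormedAddCommGroup F] [NormedSpace ℝ F]

lemma hasDerivAt_iotaT (t R φ Z : ℝ) :
    HasDerivAt (fun s => ((s, R, φ, Z) : E4)) eT t := by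
  simpa [eT] using ((hasDerivAt_id t).prodMk ((hasDerivAt_const t R).prodMk
    ((hasDerivAt_const t φ).prodMk (hasDerivAt_const t Z))))

lemma hasDerivAt_iotaR (t R φ Z : ℝ) :
    HasDerivAt (fun r => ((t, r, φ, Z) : E4)) eR R := by
  simpa [eR] using ((hasDerivAt_const R t).prodMk ((hasDerivAt_id R).prodMk
    ((hasDerivAt_const R φ).prodMk (hasDerivAt_const R Z))))

lemma hasDerivAt_iotaP (t R φ Z : ℝ) :
    HasDerivAt (fun a => ((t, R, a, Z) : E4)) eP φ := by
  simpa [eP] using ((hasDerivAt_const φ t).prodMk ((hasDerivAt_const φ R).prodMk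
    ((hasDerivAt_id φ).prodMk (hasDerivAt_const φ Z))))

lemma hasDerivAt_iotaZ (t R φ Z : ℝ) :
    HasDerivAt (fun z => ((t, R, φ, z) : E4)) eZ Z := by
  simpa [eZ] using ((hasDerivAt_const Z t).prodMk ((hasDerivAt_const Z R).prodMk
    ((hasDerivAt_const Z φ).prodMk (hasDerivAt_id Z))))

lemma smooth_diff {g : E4 → F} (hg : ContDiff ℝ (⊤:ℕ∞) g) : Differentiable ℝ g :=
  hg.differentiable (by simp)

lemma sliceT_hasDerivAt {g : E4 → F} (hg : Differentiable ℝ g) (t R φ Z : ℝ) :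
    HasDerivAt (fun s => g (s, R, φ, Z)) (fderiv ℝ g (t,R,φ,Z) eT) t :=
  (hg _).hasFDerivAt.comp_hasDerivAt t (hasDerivAt_iotaT t R φ Z)

lemma sliceR_hasDerivAt {g : E4 → F} (hg : Differentiable ℝ g) (t R φ Z : ℝ) :
    HasDerivAt (fun r => g (t, r, φ, Z)) (fderiv ℝ g (t,R,φ,Z) eR) R :=
  (hg _).hasFDerivAt.comp_hasDerivAt R (hasDerivAt_iotaR t R φ Z)

lemma sliceP_hasDerivAt {g : E4 → F} (hg : Differentiable ℝ g) (t R φ Z : ℝ) :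
    HasDerivAt (fun a => g (t, R, a, Z)) (fderiv ℝ g (t,R,φ,Z) eP) φ :=
  (hg _).hasFDerivAt.comp_hasDerivAt φ (hasDerivAt_iotaP t R φ Z)

lemma sliceZ_hasDerivAt {g : E4 → F} (hg : Differentiable ℝ g) (t R φ Z : ℝ) :
    HasDerivAt (fun z => g (t, R, φ, z)) (fderiv ℝ g (t,R,φ,Z) eZ) Z :=
  (hg _).hasFDerivAt.comp_hasDerivAt Z (hasDerivAt_iotaZ t R φ Z)

lemma dT_eq {f : F4} (hf : Smooth4 f) (t R φ Z : ℝ) :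
    dT f t R φ Z = fderiv ℝ (Fq f) (t,R,φ,Z) eT :=
  (sliceT_hasDerivAt (smooth_diff hf) t R φ Z).deriv

lemma dR_eq {f : F4} (hf : Smooth4 f) (t R φ Z : ℝ) :
    dR f t R φ Z = fderiv ℝ (Fq f) (t,R,φ,Z) eR :=
  (sliceR_hasDerivAt (smooth_diff hf) t R φ Z).deriv

lemma dP_eq {f : F4} (hf : Smooth4 f) (t R φ Z : ℝ) :
    dP f t R φ Z = fderiv ℝ (Fq f) (t,R,φ,Z) eP :=
  (sliceP_hasDerivAt (smooth_diff hf) t R φ Z).deriv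

lemma dZ_eq {f : F4} (hf : Smooth4 f) (t R φ Z : ℝ) :
    dZ f t R φ Z = fderiv ℝ (Fq f) (t,R,φ,Z) eZ :=
  (sliceZ_hasDerivAt (smooth_diff hf) t R φ Z).deriv

lemma hasDerivAt_dT {f : F4} (hf : Smooth4 f) (t R φ Z : ℝ) :
    HasDerivAt (fun s => f s R φ Z) (dT f t R φ Z) t := by
  rw [dT_eq hf]; exact sliceT_hasDerivAt (smooth_diff hf) t R φ Z

lemma hasDerivAt_dR {f : F4} (hf : Smooth4 f) (t R φ Z : ℝ) :
    HasDerivAt (fun r => f t r φ Z) (dR f t R φ Z) R := by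
  rw [dR_eq hf]; exact sliceR_hasDerivAt (smooth_diff hf) t R φ Z

lemma hasDerivAt_dP {f : F4} (hf : Smooth4 f) (t R φ Z : ℝ) :
    HasDerivAt (fun a => f t R a Z) (dP f t R φ Z) φ := by
  rw [dP_eq hf]; exact sliceP_hasDerivAt (smooth_diff hf) t R φ Z

lemma hasDerivAt_dZ {f : F4} (hf : Smooth4 f) (t R φ Z : ℝ) :
    HasDerivAt (fun z => f t R φ z) (dZ f t R φ Z) Z := by
  rw [dZ_eq hf]; exact sliceZ_hasDerivAt (smooth_diff hf) t R φ Z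

lemma smooth_clm {g : E4 → ℝ} (hg : ContDiff ℝ (⊤:ℕ∞) g) (v : E4) :
    ContDiff ℝ (⊤:ℕ∞) (fun q => fderiv ℝ g q v) :=
  (hg.fderiv_right (m := (⊤:ℕ∞)) (by exact_mod_cast le_top)).clm_apply contDiff_const

lemma dT_smooth {f : F4} (hf : Smooth4 f) : Smooth4 (dT f) := by
  have h : (fun q : E4 => dT f q.1 q.2.1 q.2.2.1 q.2.2.2)
      = fun q : E4 => fderiv ℝ (Fq f) q eT := by
    funext q; exact dT_eq hf q.1 q.2.1 q.2.2.1 q.2.2.2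
  show ContDiff ℝ (⊤:ℕ∞) _
  rw [h]; exact smooth_clm hf eT

lemma dR_smooth {f : F4} (hf : Smooth4 f) : Smooth4 (dR f) := by
  have h : (fun q : E4 => dR f q.1 q.2.1 q.2.2.1 q.2.2.2)
      = fun q : E4 => fderiv ℝ (Fq f) q eR := by
    funext q; exact dR_eq hf q.1 q.2.1 q.2.2.1 q.2.2.2
  show ContDiff ℝ (⊤:ℕ∞) _
  rw [h]; exact smooth_clm hf eR

lemma dP_smooth {f : F4} (hf : Smooth4 f) : Smooth4 (dP f) := by
  have h : (fun q : E4 => dP f q.1 q.2.1 q.2.2.1 q.2.2.2)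
      = fun q : E4 => fderiv ℝ (Fq f) q eP := by
    funext q; exact dP_eq hf q.1 q.2.1 q.2.2.1 q.2.2.2
  show ContDiff ℝ (⊤:ℕ∞) _
  rw [h]; exact smooth_clm hf eP

lemma dZ_smooth {f : F4} (hf : Smooth4 f) : Smooth4 (dZ f) := by
  have h : (fun q : E4 => dZ f q.1 q.2.1 q.2.2.1 q.2.2.2)
      = fun q : E4 => fderiv ℝ (Fq f) q eZ := by
    funext q; exact dZ_eq hf q.1 q.2.1 q.2.2.1 q.2.2.2
  show ContDiff ℝ (⊤:ℕ∞) _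
  rw [h]; exact smooth_clm hf eZ

lemma smooth_cont {f : F4} (hf : Smooth4 f) :
    Continuous (fun q : E4 => f q.1 q.2.1 q.2.2.1 q.2.2.2) :=
  hf.continuous

/-- Clairaut / Schwarz for the `R`,`Z` slices. -/
lemma dRdZ_comm {f : F4} (hf : Smooth4 f) (t R φ Z : ℝ) :
    dR (dZ f) t R φ Z = dZ (dR f) t R φ Z := by
  have hd : Differentiable ℝ (fderiv ℝ (Fq f)) :=
    smooth_diff (hf.fderiv_right (m := (⊤:ℕ∞)) (by exact_mod_cast le_top))
  have e1 : dR (dZ f) t R φ Z = fderiv ℝ (fderiv ℝ (Fq f)) (t,R,φ,Z) eR eZ := by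
    have hfun : (fun r => dZ f t r φ Z)
        = fun r => (ContinuousLinearMap.apply ℝ ℝ eZ) (fderiv ℝ (Fq f) (t,r,φ,Z)) := by
      funext r; exact dZ_eq hf t r φ Z
    have h2 := (ContinuousLinearMap.apply ℝ ℝ eZ).hasFDerivAt.comp_hasDerivAt R
      (sliceR_hasDerivAt hd t R φ Z)
    rw [dR, hfun]
    exact h2.deriv
  have e2 : dZ (dR f) t R φ Z = fderiv ℝ (fderiv ℝ (Fq f)) (t,R,φ,Z) eZ eR := by
    have hfun : (fun z => dR f t R φ z)
        = fun z => (ContinuousLinearMap.apply ℝ ℝ eR) (fderiv ℝ (Fq f) (t,R,φ,z)) := by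
      funext z; exact dR_eq hf t R φ z
    have h2 := (ContinuousLinearMap.apply ℝ ℝ eR).hasFDerivAt.comp_hasDerivAt Z
      (sliceZ_hasDerivAt hd t R φ Z)
    rw [dZ, hfun]
    exact h2.deriv
  have hsym : IsSymmSndFDerivAt ℝ (Fq f) (t,R,φ,Z) :=
    hf.contDiffAt.isSymmSndFDerivAt (by rw [minSmoothness_of_isRCLikeNormedField]; exact WithTop.coe_le_coe.mpr le_top)
  rw [e1, e2, hsym eR eZ]

end HelicityAux

namespace HelicityAux

open MeasureTheory Set Metric

section Support

variable {f : F4} {K : Set (ℝ×ℝ)}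

lemma dT_zero (h0 : ∀ t R φ Z : ℝ, (R, Z) ∉ K → f t R φ Z = 0) :
    ∀ t R φ Z : ℝ, (R,Z) ∉ K → dT f t R φ Z = 0 := by
  intro t R φ Z h
  have hc : (fun s => f s R φ Z) = fun _ : ℝ => (0:ℝ) := funext fun s => h0 s R φ Z h
  rw [dT, hc, deriv_const]

lemma dP_zero (h0 : ∀ t R φ Z : ℝ, (R, Z) ∉ K → f t R φ Z = 0) :
    ∀ t R φ Z : ℝ, (R,Z) ∉ K → dP f t R φ Z = 0 := by
  intro t R φ Z h
  have hc : (fun a => f t R a Z) = fun _ : ℝ => (0:ℝ) := funext fun a => h0 t R a Z h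
  rw [dP, hc, deriv_const]

lemma dR_zero (hK : IsCompact K) (h0 : ∀ t R φ Z : ℝ, (R, Z) ∉ K → f t R φ Z = 0) :
    ∀ t R φ Z : ℝ, (R,Z) ∉ K → dR f t R φ Z = 0 := by
  intro t R φ Z h
  have hop : IsOpen ((fun r : ℝ => (r, Z)) ⁻¹' Kᶜ) :=
    hK.isClosed.isOpen_compl.preimage (by fun_prop)
  have hev : (fun r => f t r φ Z) =ᶠ[nhds R] fun _ => (0:ℝ) := by
    filter_upwards [hop.mem_nhds h] with r hr using h0 t r φ Z hr
  rw [dR, hev.deriv_eq, deriv_const]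

lemma dZ_zero (hK : IsCompact K) (h0 : ∀ t R φ Z : ℝ, (R, Z) ∉ K → f t R φ Z = 0) :
    ∀ t R φ Z : ℝ, (R,Z) ∉ K → dZ f t R φ Z = 0 := by
  intro t R φ Z h
  have hop : IsOpen ((fun z : ℝ => (R, z)) ⁻¹' Kᶜ) :=
    hK.isClosed.isOpen_compl.preimage (by fun_prop)
  have hev : (fun z => f t R φ z) =ᶠ[nhds Z] fun _ => (0:ℝ) := by
    filter_upwards [hop.mem_nhds h] with z hz using h0 t R φ z hz
  rw [dZ, hev.deriv_eq, deriv_const]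

end Support

/-- 1D: integral of a compactly supported derivative vanishes. -/
lemma integral1d_zero (g g' : ℝ → ℝ) (M : ℝ) (hM : 0 ≤ M)
    (hder : ∀ x, HasDerivAt g (g' x) x) (hcont : Continuous g')
    (hg : ∀ x, x ∉ Icc (-M) M → g x = 0) (hg' : ∀ x, x ∉ Icc (-M) M → g' x = 0) :
    ∫ x, g' x = 0 := by
  have hle : -(M+1) ≤ M+1 := by linarith
  have h1 : ∫ x in (-(M+1))..(M+1), g' x = g (M+1) - g (-(M+1)) :=
    intervalIntegral.integral_eq_sub_of_hasDerivAt (fun x _ => hder x)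
      (hcont.intervalIntegrable _ _)
  have h2 : ∫ x, g' x = ∫ x in Ioc (-(M+1)) (M+1), g' x := by
    refine (setIntegral_eq_integral_of_forall_compl_eq_zero ?_).symm
    intro x hx
    apply hg'
    rw [mem_Ioc] at hx
    push_neg at hx
    rw [mem_Icc]
    push_neg
    intro hx2
    rcases lt_or_ge (-(M+1)) x with h | h
    · have := hx h; linarith
    · linarith
  have hb1 : g (M+1) = 0 := by
    apply hg; rw [mem_Icc]; push_neg; intro h; linarith
  have hb2 : g (-(M+1)) = 0 := by
    apply hg; rw [mem_Icc]; push_neg; intro h; linarith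
  rw [h2, ← intervalIntegral.integral_of_le hle, h1, hb1, hb2, sub_zero]

/-- 2D: integral over `ℝ²` of a first-coordinate partial derivative of a
compactly supported function vanishes. -/
lemma integral_d1_zero (a D : ℝ × ℝ → ℝ) (hD : Continuous D)
    {K : Set (ℝ×ℝ)} (hK : IsCompact K)
    (ha0 : ∀ q, q ∉ K → a q = 0) (hD0 : ∀ q, q ∉ K → D q = 0)
    (hder : ∀ q : ℝ × ℝ, HasDerivAt (fun r => a (r, q.2)) (D q) q.1) :
    ∫ q : ℝ × ℝ, D q = 0 := by
  obtain ⟨M0, hM0⟩ := hK.isBounded.subset_closedBall 0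
  set M := max M0 0 with hMdef
  have hM : 0 ≤ M := le_max_right _ _
  have hKM : ∀ q ∈ K, |q.1| ≤ M ∧ |q.2| ≤ M := by
    intro q hq
    have h1 : ‖q‖ ≤ M := le_trans (mem_closedBall_zero_iff.mp (hM0 hq)) (le_max_left _ _)
    exact ⟨le_trans (norm_fst_le q) h1, le_trans (norm_snd_le q) h1⟩
  have hint : Integrable D := hD.integrable_of_hasCompactSupport
    (HasCompactSupport.intro hK hD0)
  rw [show (volume : Measure (ℝ × ℝ)) = (volume : Measure ℝ).prod volume from
    Measure.volume_eq_prod ℝ ℝ] at hint ⊢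
  rw [integral_prod_symm D hint]
  have hin : ∀ y : ℝ, ∫ x : ℝ, D (x, y) = 0 := by
    intro y
    refine integral1d_zero (fun x => a (x, y)) (fun x => D (x, y)) M hM
      (fun x => hder (x, y)) (hD.comp (by fun_prop)) ?_ ?_
    · intro x hx
      refine ha0 _ fun hmem => hx ?_
      have := (hKM _ hmem).1
      rw [mem_Icc]; constructor <;> [linarith [neg_abs_le x]; linarith [le_abs_self x]]
    · intro x hx
      refine hD0 _ fun hmem => hx ?_
      have := (hKM _ hmem).1
      rw [mem_Icc]; constructor <;> [linarith [neg_abs_le x]; linarith [le_abs_self x]]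
  simp only [hin, integral_zero]

/-- 2D: integral over `ℝ²` of a second-coordinate partial derivative of a
compactly supported function vanishes. -/
lemma integral_d2_zero (a D : ℝ × ℝ → ℝ) (hD : Continuous D)
    {K : Set (ℝ×ℝ)} (hK : IsCompact K)
    (ha0 : ∀ q, q ∉ K → a q = 0) (hD0 : ∀ q, q ∉ K → D q = 0)
    (hder : ∀ q : ℝ × ℝ, HasDerivAt (fun z => a (q.1, z)) (D q) q.2) :
    ∫ q : ℝ × ℝ, D q = 0 := by
  obtain ⟨M0, hM0⟩ := hK.isBounded.subset_closedBall 0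
  set M := max M0 0 with hMdef
  have hM : 0 ≤ M := le_max_right _ _
  have hKM : ∀ q ∈ K, |q.1| ≤ M ∧ |q.2| ≤ M := by
    intro q hq
    have h1 : ‖q‖ ≤ M := le_trans (mem_closedBall_zero_iff.mp (hM0 hq)) (le_max_left _ _)
    exact ⟨le_trans (norm_fst_le q) h1, le_trans (norm_snd_le q) h1⟩
  have hint : Integrable D := hD.integrable_of_hasCompactSupport
    (HasCompactSupport.intro hK hD0)
  rw [show (volume : Measure (ℝ × ℝ)) = (volume : Measure ℝ).prod volume from
    Measure.volume_eq_prod ℝ ℝ] at hint ⊢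
  rw [integral_prod D hint]
  have hin : ∀ x : ℝ, ∫ y : ℝ, D (x, y) = 0 := by
    intro x
    refine integral1d_zero (fun y => a (x, y)) (fun y => D (x, y)) M hM
      (fun y => hder (x, y)) (hD.comp (by fun_prop)) ?_ ?_
    · intro y hy
      refine ha0 _ fun hmem => hy ?_
      have := (hKM _ hmem).2
      rw [mem_Icc]; constructor <;> [linarith [neg_abs_le y]; linarith [le_abs_self y]]
    · intro y hy
      refine hD0 _ fun hmem => hy ?_
      have := (hKM _ hmem).2
      rw [mem_Icc]; constructor <;> [linarith [neg_abs_le y]; linarith [le_abs_self y]]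
  simp only [hin, integral_zero]

end HelicityAux

namespace HelicityAux

open MeasureTheory Set Metric

/-- Continuity of an `(R,Z)`-slice of a smooth field. -/
lemma cont_slice2 {f : F4} (hf : Smooth4 f) (t φ : ℝ) :
    Continuous fun q : ℝ × ℝ => f t q.1 φ q.2 := by
  have h : Continuous fun q : ℝ × ℝ => ((t, q.1, φ, q.2) : E4) := by fun_prop
  exact hf.continuous.comp h

/-- The integral of the Poisson bracket over the (compact) support region vanishes. -/
lemma integral_pb_zero (ψ u : F4) (hψ : Smooth4 ψ) (hu : Smooth4 u)
    {K : Set (ℝ×ℝ)} (hK : IsCompact K)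
    (hsupp : ∀ t R φ Z : ℝ, (R, Z) ∉ K → ψ t R φ Z = 0 ∧ u t R φ Z = 0)
    (t φ : ℝ) : ∫ q in K, pb ψ u t q.1 φ q.2 = 0 := by
  have hψ0 : ∀ t R φ Z : ℝ, (R, Z) ∉ K → ψ t R φ Z = 0 := fun t R φ Z h => (hsupp t R φ Z h).1
  have hu0 : ∀ t R φ Z : ℝ, (R, Z) ∉ K → u t R φ Z = 0 := fun t R φ Z h => (hsupp t R φ Z h).2
  have hdRψ0 := dR_zero hK hψ0
  have hdZψ0 := dZ_zero hK hψ0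
  have hdRu0 := dR_zero hK hu0
  have hdZu0 := dZ_zero hK hu0
  have hdRdZu0 := dR_zero hK hdZu0
  have hdZdRu0 := dZ_zero hK hdRu0
  -- the bracket vanishes off `K`
  have hpb0 : ∀ q : ℝ × ℝ, q ∉ K → pb ψ u t q.1 φ q.2 = 0 := by
    intro q hq
    rw [pb, hdRψ0 t q.1 φ q.2 hq, hdZψ0 t q.1 φ q.2 hq]
    ring
  -- auxiliary two-variable functions
  set A : ℝ × ℝ → ℝ := fun q => ψ t q.1 φ q.2 * dZ u t q.1 φ q.2 with hA
  set B : ℝ × ℝ → ℝ := fun q => ψ t q.1 φ q.2 * dR u t q.1 φ q.2 with hB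
  set D1 : ℝ × ℝ → ℝ := fun q =>
    dR ψ t q.1 φ q.2 * dZ u t q.1 φ q.2 + ψ t q.1 φ q.2 * dR (dZ u) t q.1 φ q.2 with hD1
  set D2 : ℝ × ℝ → ℝ := fun q =>
    dZ ψ t q.1 φ q.2 * dR u t q.1 φ q.2 + ψ t q.1 φ q.2 * dZ (dR u) t q.1 φ q.2 with hD2
  have hD1c : Continuous D1 :=
    ((cont_slice2 (dR_smooth hψ) t φ).mul (cont_slice2 (dZ_smooth hu) t φ)).add
      ((cont_slice2 hψ t φ).mul (cont_slice2 (dR_smooth (dZ_smooth hu)) t φ))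
  have hD2c : Continuous D2 :=
    ((cont_slice2 (dZ_smooth hψ) t φ).mul (cont_slice2 (dR_smooth hu) t φ)).add
      ((cont_slice2 hψ t φ).mul (cont_slice2 (dZ_smooth (dR_smooth hu)) t φ))
  have hA0 : ∀ q, q ∉ K → A q = 0 := by
    intro q hq; rw [hA]; simp only; rw [hψ0 t q.1 φ q.2 hq]; ring
  have hB0 : ∀ q, q ∉ K → B q = 0 := by
    intro q hq; rw [hB]; simp only; rw [hψ0 t q.1 φ q.2 hq]; ring
  have hD10 : ∀ q, q ∉ K → D1 q = 0 := by
    intro q hq; rw [hD1]; simp only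
    rw [hψ0 t q.1 φ q.2 hq, hdRψ0 t q.1 φ q.2 hq]; ring
  have hD20 : ∀ q, q ∉ K → D2 q = 0 := by
    intro q hq; rw [hD2]; simp only
    rw [hψ0 t q.1 φ q.2 hq, hdZψ0 t q.1 φ q.2 hq]; ring
  have hD1der : ∀ q : ℝ × ℝ, HasDerivAt (fun r => A (r, q.2)) (D1 q) q.1 := by
    intro q
    exact (hasDerivAt_dR hψ t q.1 φ q.2).mul (hasDerivAt_dR (dZ_smooth hu) t q.1 φ q.2)
  have hD2der : ∀ q : ℝ × ℝ, HasDerivAt (fun z => B (q.1, z)) (D2 q) q.2 := by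
    intro q
    exact (hasDerivAt_dZ hψ t q.1 φ q.2).mul (hasDerivAt_dZ (dR_smooth hu) t q.1 φ q.2)
  have hint1 : Integrable D1 := hD1c.integrable_of_hasCompactSupport
    (HasCompactSupport.intro hK hD10)
  have hint2 : Integrable D2 := hD2c.integrable_of_hasCompactSupport
    (HasCompactSupport.intro hK hD20)
  have step1 : ∫ q in K, pb ψ u t q.1 φ q.2 = ∫ q : ℝ × ℝ, pb ψ u t q.1 φ q.2 :=
    setIntegral_eq_integral_of_forall_compl_eq_zero fun q hq => hpb0 q hq
  have step2 : (fun q : ℝ × ℝ => pb ψ u t q.1 φ q.2) = fun q => D1 q - D2 q := by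
    funext q
    rw [hD1, hD2, pb]
    simp only
    rw [dRdZ_comm hu]
    ring
  rw [step1, step2, integral_sub hint1 hint2,
    integral_d1_zero A D1 hD1c hK hA0 hD10 hD1der,
    integral_d2_zero B D2 hD2c hK hB0 hD20 hD2der, sub_zero]

end HelicityAux

open HelicityAux Set Metric in
private lemma helicity_main (F0 : ℝ) (ψ u : F4)
    (hψ : Smooth4 ψ) (hu : Smooth4 u)
    (hψper : ∀ t R φ Z : ℝ, ψ t R (φ + 2 * π) Z = ψ t R φ Z)
    (huper : ∀ t R φ Z : ℝ, u t R (φ + 2 * π) Z = u t R φ Z)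
    (K : Set (ℝ × ℝ)) (hK : IsCompact K) (hKpos : ∀ q ∈ K, 0 < q.1)
    (hsupp : ∀ t R φ Z : ℝ, (R, Z) ∉ K → ψ t R φ Z = 0 ∧ u t R φ Z = 0)
    (hflux : ∀ t R φ Z : ℝ, 0 < R →
      dT ψ t R φ Z = R * pb ψ u t R φ Z - F0 * dP u t R φ Z) :
    ∀ t₁ t₂ : ℝ,
      (∫ φ in (0:ℝ)..(2 * π), ∫ q in K, ψ t₁ q.1 φ q.2 / q.1 ^ 2 * q.1)
        = ∫ φ in (0:ℝ)..(2 * π), ∫ q in K, ψ t₂ q.1 φ q.2 / q.1 ^ 2 * q.1 := by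
  intro t₁ t₂
  rcases Set.eq_empty_or_nonempty K with rfl | hKne
  · simp
  obtain ⟨q₀, hq₀K, hq₀min⟩ := hK.exists_isMinOn hKne continuous_fst.continuousOn
  have hδpos : 0 < q₀.1 := hKpos q₀ hq₀K
  have hδle : ∀ q ∈ K, q₀.1 ≤ q.1 := fun q hq => hq₀min hq
  have hKm : MeasurableSet K := hK.measurableSet
  haveI h1fin : IsFiniteMeasure ((volume : Measure ℝ).restrict (Set.Ioc 0 (2*π))) :=
    ⟨by rw [Measure.restrict_apply_univ]; exact measure_Ioc_lt_top⟩
  haveI h2fin : IsFiniteMeasure ((volume : Measure (ℝ×ℝ)).restrict K) :=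
    ⟨by rw [Measure.restrict_apply_univ]; exact hK.measure_lt_top⟩
  have hμr : ((volume : Measure ℝ).restrict (Set.Ioc 0 (2*π))).prod
        ((volume : Measure (ℝ×ℝ)).restrict K)
      = (volume : Measure (ℝ × ℝ × ℝ)).restrict ((Set.Ioc 0 (2*π)) ×ˢ K) := by
    rw [Measure.prod_restrict, ← Measure.volume_eq_prod]
  -- integrability helper
  have hInt : ∀ G : ℝ × ℝ × ℝ → ℝ,
      ContinuousOn G ((Set.Icc 0 (2*π)) ×ˢ K) →
      Integrable G (((volume : Measure ℝ).restrict (Set.Ioc 0 (2*π))).prod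
        ((volume : Measure (ℝ×ℝ)).restrict K)) := by
    intro G hG
    have hC : IsCompact ((Set.Icc (0:ℝ) (2*π)) ×ˢ K) := isCompact_Icc.prod hK
    have h1 : IntegrableOn G ((Set.Icc (0:ℝ) (2*π)) ×ˢ K) := hG.integrableOn_compact hC
    rw [hμr]
    exact h1.mono_set (Set.prod_mono_left Set.Ioc_subset_Icc_self)
  have hne : ∀ q ∈ K, q.1 ≠ 0 := fun q hq =>
    (lt_of_lt_of_le hδpos (hδle q hq)).ne'
  have hcontOn : ∀ c : F4, Smooth4 c → ∀ t : ℝ,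
      ContinuousOn (fun p : ℝ × ℝ × ℝ => c t p.2.1 p.1 p.2.2 / p.2.1 ^ 2 * p.2.1)
        ((Set.Icc 0 (2*π)) ×ˢ K) := by
    intro c hc t
    have h2 : Continuous fun p : ℝ × ℝ × ℝ => ((t, p.2.1, p.1, p.2.2) : ℝ×ℝ×ℝ×ℝ) := by fun_prop
    have h1 : Continuous fun p : ℝ × ℝ × ℝ => c t p.2.1 p.1 p.2.2 := hc.continuous.comp h2
    refine ContinuousOn.mul ?_ (Continuous.continuousOn (by fun_prop))
    exact h1.continuousOn.div (Continuous.continuousOn (by fun_prop))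
      (fun p hp => pow_ne_zero 2 (hne p.2 hp.2))
  -- rewrite the iterated integral as a product integral
  have hJeq : ∀ t : ℝ, (∫ φ in (0:ℝ)..(2 * π), ∫ q in K, ψ t q.1 φ q.2 / q.1 ^ 2 * q.1)
      = ∫ p, ψ t p.2.1 p.1 p.2.2 / p.2.1 ^ 2 * p.2.1
          ∂(((volume : Measure ℝ).restrict (Set.Ioc 0 (2*π))).prod
            ((volume : Measure (ℝ×ℝ)).restrict K)) := by
    intro t
    rw [intervalIntegral.integral_of_le Real.two_pi_pos.le,
      integral_prod _ (hInt _ (hcontOn ψ hψ t))]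
  -- the time derivative of the product integral vanishes
  have hderiv0 : ∀ t₀ : ℝ, HasDerivAt
      (fun t => ∫ p, ψ t p.2.1 p.1 p.2.2 / p.2.1 ^ 2 * p.2.1
          ∂(((volume : Measure ℝ).restrict (Set.Ioc 0 (2*π))).prod
            ((volume : Measure (ℝ×ℝ)).restrict K))) 0 t₀ := by
    intro t₀
    have hCC : IsCompact ((Set.Icc (t₀-1) (t₀+1)) ×ˢ ((Set.Icc (0:ℝ) (2*π)) ×ˢ K)) :=
      isCompact_Icc.prod (isCompact_Icc.prod hK)
    have hcontD : ContinuousOn (fun x : ℝ × ℝ × ℝ × ℝ => dT ψ x.1 x.2.2.1 x.2.1 x.2.2.2)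
        ((Set.Icc (t₀-1) (t₀+1)) ×ˢ ((Set.Icc (0:ℝ) (2*π)) ×ˢ K)) := by
      have h2 : Continuous fun x : ℝ × ℝ × ℝ × ℝ =>
          ((x.1, x.2.2.1, x.2.1, x.2.2.2) : ℝ×ℝ×ℝ×ℝ) := by fun_prop
      exact ((dT_smooth hψ).continuous.comp h2).continuousOn
    obtain ⟨C, hC⟩ := hCC.exists_bound_of_continuousOn hcontD
    have hae : ∀ᵐ p ∂(((volume : Measure ℝ).restrict (Set.Ioc 0 (2*π))).prod
        ((volume : Measure (ℝ×ℝ)).restrict K)), p ∈ (Set.Ioc (0:ℝ) (2*π)) ×ˢ K := by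
      rw [hμr]
      exact ae_restrict_mem (measurableSet_Ioc.prod hKm)
    have hmain := hasDerivAt_integral_of_dominated_loc_of_deriv_le
      (μ := ((volume : Measure ℝ).restrict (Set.Ioc 0 (2*π))).prod
        ((volume : Measure (ℝ×ℝ)).restrict K))
      (F := fun t p => ψ t p.2.1 p.1 p.2.2 / p.2.1 ^ 2 * p.2.1)
      (F' := fun t p => dT ψ t p.2.1 p.1 p.2.2 / p.2.1 ^ 2 * p.2.1)
      (bound := fun _ => |C| / q₀.1) (x₀ := t₀) (s := Metric.ball t₀ 1) (Metric.ball_mem_nhds t₀ one_pos)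
      (Filter.Eventually.of_forall fun t => (hInt _ (hcontOn ψ hψ t)).aestronglyMeasurable)
      (hInt _ (hcontOn ψ hψ t₀))
      ((hInt _ (hcontOn (dT ψ) (dT_smooth hψ) t₀)).aestronglyMeasurable)
      ?_ (integrable_const _)
      (Filter.Eventually.of_forall fun p t _ =>
        ((hasDerivAt_dT hψ t p.2.1 p.1 p.2.2).div_const _).mul_const _)
    · have hz : (∫ p, dT ψ t₀ p.2.1 p.1 p.2.2 / p.2.1 ^ 2 * p.2.1
          ∂(((volume : Measure ℝ).restrict (Set.Ioc 0 (2*π))).prod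
            ((volume : Measure (ℝ×ℝ)).restrict K))) = 0 := by
        rw [integral_prod _ (hInt _ (hcontOn (dT ψ) (dT_smooth hψ) t₀))]
        show (∫ φ in Set.Ioc (0:ℝ) (2*π), ∫ q in K,
            dT ψ t₀ q.1 φ q.2 / q.1 ^ 2 * q.1) = 0
        have hsplit : ∀ φ : ℝ, (∫ q in K, dT ψ t₀ q.1 φ q.2 / q.1 ^ 2 * q.1)
            = -F0 * ∫ q in K, dP u t₀ q.1 φ q.2 / q.1 := by
          intro φ
          have hpbint : IntegrableOn (fun q : ℝ×ℝ => pb ψ u t₀ q.1 φ q.2) K := by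
            apply ContinuousOn.integrableOn_compact hK
            apply Continuous.continuousOn
            exact ((cont_slice2 (dR_smooth hψ) t₀ φ).mul
                (cont_slice2 (dZ_smooth hu) t₀ φ)).sub
              ((cont_slice2 (dZ_smooth hψ) t₀ φ).mul
                (cont_slice2 (dR_smooth hu) t₀ φ))
          have hdpint : IntegrableOn (fun q : ℝ×ℝ => dP u t₀ q.1 φ q.2 / q.1) K := by
            apply ContinuousOn.integrableOn_compact hK
            exact (cont_slice2 (dP_smooth hu) t₀ φ).continuousOn.div
              (Continuous.continuousOn (by fun_prop)) (fun q hq => hne q hq)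
          calc (∫ q in K, dT ψ t₀ q.1 φ q.2 / q.1 ^ 2 * q.1)
              = ∫ q in K, (pb ψ u t₀ q.1 φ q.2 + (-F0) * (dP u t₀ q.1 φ q.2 / q.1)) := by
                refine setIntegral_congr_fun hKm fun q hq => ?_
                have hR : 0 < q.1 := hKpos q hq
                rw [hflux t₀ q.1 φ q.2 hR]
                field_simp
                ring
            _ = (∫ q in K, pb ψ u t₀ q.1 φ q.2)
                  + ∫ q in K, (-F0) * (dP u t₀ q.1 φ q.2 / q.1) :=
                integral_add hpbint (hdpint.const_mul _)
            _ = -F0 * ∫ q in K, dP u t₀ q.1 φ q.2 / q.1 := by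
                rw [integral_pb_zero ψ u hψ hu hK hsupp t₀ φ, zero_add, integral_const_mul]
        have hswap : Integrable (Function.uncurry fun φ (q : ℝ×ℝ) => dP u t₀ q.1 φ q.2 / q.1)
            (((volume : Measure ℝ).restrict (Set.Ioc 0 (2*π))).prod
              ((volume : Measure (ℝ×ℝ)).restrict K)) := by
          refine hInt (fun p : ℝ × ℝ × ℝ => dP u t₀ p.2.1 p.1 p.2.2 / p.2.1) ?_
          have h2 : Continuous fun p : ℝ × ℝ × ℝ => ((t₀, p.2.1, p.1, p.2.2) : ℝ×ℝ×ℝ×ℝ) := by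
            fun_prop
          exact ((dP_smooth hu).continuous.comp h2).continuousOn.div
            (Continuous.continuousOn (by fun_prop)) (fun p hp => hne p.2 hp.2)
        have hz2 : ∀ q : ℝ×ℝ, (∫ φ in Set.Ioc (0:ℝ) (2*π), dP u t₀ q.1 φ q.2 / q.1) = 0 := by
          intro q
          have hcont : Continuous fun φ => dP u t₀ q.1 φ q.2 := by
            have h2 : Continuous fun φ : ℝ => ((t₀, q.1, φ, q.2) : ℝ×ℝ×ℝ×ℝ) := by fun_prop
            exact (dP_smooth hu).continuous.comp h2
          have hdd : (fun φ => dP u t₀ q.1 φ q.2) = deriv (fun a => u t₀ q.1 a q.2) :=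
            funext fun φ => rfl
          have hder : ∫ φ in (0:ℝ)..(2*π), dP u t₀ q.1 φ q.2
              = u t₀ q.1 (2*π) q.2 - u t₀ q.1 0 q.2 := by
            rw [hdd]
            refine intervalIntegral.integral_deriv_eq_sub
              (fun x _ => (hasDerivAt_dP hu t₀ q.1 x q.2).differentiableAt) ?_
            rw [← hdd]
            exact hcont.intervalIntegrable _ _
          have hper : u t₀ q.1 (2*π) q.2 - u t₀ q.1 0 q.2 = 0 := by
            have h3 := huper t₀ q.1 0 q.2
            rw [zero_add] at h3
            rw [h3]; ring
          rw [integral_div, ← intervalIntegral.integral_of_le Real.two_pi_pos.le,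
            hder, hper, zero_div]
        calc (∫ φ in Set.Ioc (0:ℝ) (2*π), ∫ q in K, dT ψ t₀ q.1 φ q.2 / q.1 ^ 2 * q.1)
            = ∫ φ in Set.Ioc (0:ℝ) (2*π), -F0 * ∫ q in K, dP u t₀ q.1 φ q.2 / q.1 := by
              exact integral_congr_ae (Filter.Eventually.of_forall fun φ => hsplit φ)
          _ = -F0 * ∫ φ in Set.Ioc (0:ℝ) (2*π), ∫ q in K, dP u t₀ q.1 φ q.2 / q.1 :=
              integral_const_mul _ _
          _ = -F0 * ∫ q in K, ∫ φ in Set.Ioc (0:ℝ) (2*π), dP u t₀ q.1 φ q.2 / q.1 := by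
              rw [integral_integral_swap hswap]
          _ = 0 := by
              have : (fun q : ℝ×ℝ => ∫ φ in Set.Ioc (0:ℝ) (2*π), dP u t₀ q.1 φ q.2 / q.1)
                  = fun _ => (0:ℝ) := funext fun q => hz2 q
              rw [this, integral_const]
              simp
      have h5 := hmain.2
      beta_reduce at h5
      rw [hz] at h5
      exact h5
    · -- the bound
      filter_upwards [hae] with p hp
      intro t ht
      have hpK := hp.2
      have hR : 0 < p.2.1 := lt_of_lt_of_le hδpos (hδle _ hpK)
      have htI : t ∈ Set.Icc (t₀-1) (t₀+1) := by
        rw [Metric.mem_ball, Real.dist_eq] at ht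
        have h4 := abs_lt.mp ht
        rw [Set.mem_Icc]
        constructor <;> linarith [h4.1, h4.2]
      have hb := hC (t, p.1, p.2) ⟨htI, Set.Ioc_subset_Icc_self hp.1, hpK⟩
      have heq : dT ψ t p.2.1 p.1 p.2.2 / p.2.1 ^ 2 * p.2.1
          = dT ψ t p.2.1 p.1 p.2.2 / p.2.1 := by
        rw [pow_two, ← div_div, div_mul_cancel₀ _ hR.ne']
      rw [Real.norm_eq_abs, heq, abs_div, abs_of_pos hR]
      refine div_le_div₀ (abs_nonneg C) ?_ hδpos (hδle _ hpK)
      exact le_trans (le_trans (le_of_eq (Real.norm_eq_abs _).symm) hb) (le_abs_self C)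
  rw [hJeq t₁, hJeq t₂]
  exact is_const_of_deriv_eq_zero (fun t => (hderiv0 t).differentiableAt)
    (fun t => (hderiv0 t).deriv) t₁ t₂

/-- conservation of magnetic helicity `∫ (ψ/R²) dW`, `dW = R dR dZ dφ`,
for the ideal reduced flux equation. -/
theorem magnetic_helicity_conservation (F0 : ℝ) (ψ u : F4)
    (hψ : Smooth4 ψ) (hu : Smooth4 u)
    (hψper : ∀ t R φ Z : ℝ, ψ t R (φ + 2 * π) Z = ψ t R φ Z)
    (huper : ∀ t R φ Z : ℝ, u t R (φ + 2 * π) Z = u t R φ Z)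
    (K : Set (ℝ × ℝ)) (hK : IsCompact K) (hKpos : ∀ q ∈ K, 0 < q.1)
    (hsupp : ∀ t R φ Z : ℝ, (R, Z) ∉ K → ψ t R φ Z = 0 ∧ u t R φ Z = 0)
    (hflux : ∀ t R φ Z : ℝ, 0 < R →
      dT ψ t R φ Z = R * pb ψ u t R φ Z - F0 * dP u t R φ Z) :
    ∀ t₁ t₂ : ℝ,
      (∫ φ in (0:ℝ)..(2 * π), ∫ q in K, ψ t₁ q.1 φ q.2 / q.1 ^ 2 * q.1)
        = ∫ φ in (0:ℝ)..(2 * π), ∫ q in K, ψ t₂ q.1 φ q.2 / q.1 ^ 2 * q.1 :=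
  helicity_main F0 ψ u hψ hu hψper huper K hK hKpos hsupp hflux
end
end
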